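/- arXiv:1509.00126 — 5 statements merged into one kernel-verified Lean document; each statement's English description precedes it below -/
import Mathlib

section
/- Theorem 2(a): If (1−δ)·f_β > c, then the complete graph on I is strongly efficient, and it is the unique strongly efficient network. -/
open Finset

noncomputable section

open scoped Classical

variable {I : Type*}

/-- Benefit function of the two-type connections model: a connection to a
type-α agent (a member of `A`) yields `fα`, a connection to a type-β agent
yields `fβ` (before spatial discounting). -/
def fTheta [DecidableEq I] (A : Finset I) (fα fβ : ℝ) (j : I) : ℝ :=
  if j ∈ A then fα else fβ

/-- One-period payoff of agent `i` in network `g`: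
`u_i(g) = Σ_{j ≠ i reachable from i} δ^(d_g(i,j)-1) f(θ_j) − deg_g(i)·c`. -/
def payoff [Fintype I] (f : I → ℝ) (c δ : ℝ) (g : SimpleGraph I) (i : I) : ℝ :=
  (∑ j ∈ univ.filter fun j => j ≠ i ∧ g.Reachable i j, δ ^ (g.dist i j - 1) * f j)
    - ((univ.filter fun j => g.Adj i j).card : ℝ) * c

/-- Total one-period payoff `ν(g) = Σ_i u_i(g)`. -/
def totalPayoff [Fintype I] (f : I → ℝ) (c δ : ℝ) (g : SimpleGraph I) : ℝ :=
  ∑ i, payoff f c δ g i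

/-- A network is strongly efficient if it maximizes the total payoff. -/
def StronglyEfficient [Fintype I] (f : I → ℝ) (c δ : ℝ) (g : SimpleGraph I) : Prop :=
  ∀ g' : SimpleGraph I, totalPayoff f c δ g' ≤ totalPayoff f c δ g

/-- A network `g` is core-stable if no subgroup `I'` of agents, together with a
network `g'` all of whose links are inside `I'`, gives every member of `I'` a
weakly higher payoff and some member a strictly higher payoff. -/
def CoreStable [Fintype I] (f : I → ℝ) (c δ : ℝ) (g : SimpleGraph I) : Prop :=
  ¬ ∃ (I' : Finset I) (g' : SimpleGraph I),
      (∀ i j : I, g'.Adj i j → i ∈ I' ∧ j ∈ I') ∧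
      (∀ i ∈ I', payoff f c δ g i ≤ payoff f c δ g' i) ∧
      (∃ i ∈ I', payoff f c δ g i < payoff f c δ g' i)

/-- The network whose links are exactly the pairs with at least one endpoint in `A`. -/
def withCore (A : Finset I) : SimpleGraph I where
  Adj i j := i ≠ j ∧ (i ∈ A ∨ j ∈ A)
  symm := ⟨fun i j h => ⟨h.1.symm, h.2.symm⟩⟩
  loopless := ⟨fun i h => h.1 rfl⟩

/-- The clique on `A`: exactly all pairs of distinct members of `A` are linked. -/
def cliqueOn (A : Finset I) : SimpleGraph I where
  Adj i j := i ≠ j ∧ i ∈ A ∧ j ∈ A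
  symm := ⟨fun i j h => ⟨h.1.symm, h.2.2, h.2.1⟩⟩
  loopless := ⟨fun i h => h.1 rfl⟩

/-- Clique on `A` together with the links `{i₀, j}` for every agent `j ∉ A`. -/
def coreStar (A : Finset I) (i₀ : I) : SimpleGraph I where
  Adj i j := i ≠ j ∧ ((i ∈ A ∧ j ∈ A) ∨ (i = i₀ ∧ j ∉ A) ∨ (j = i₀ ∧ i ∉ A))
  symm := by
    constructor
    rintro i j ⟨hne, h⟩
    refine ⟨hne.symm, ?_⟩
    rcases h with h | h | h
    · exact Or.inl ⟨h.2, h.1⟩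
    · exact Or.inr (Or.inr h)
    · exact Or.inr (Or.inl h)
  loopless := ⟨fun i h => h.1 rfl⟩

/-- The star on all agents centered at `i₀`. -/
def starAll (i₀ : I) : SimpleGraph I where
  Adj i j := i ≠ j ∧ (i = i₀ ∨ j = i₀)
  symm := ⟨fun i j h => ⟨h.1.symm, h.2.symm⟩⟩
  loopless := ⟨fun i h => h.1 rfl⟩

/-- The star on the agents in `A`, centered at `i₀`. -/
def starOn (A : Finset I) (i₀ : I) : SimpleGraph I where
  Adj i j := i ≠ j ∧ (i = i₀ ∨ j = i₀) ∧ i ∈ A ∧ j ∈ A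
  symm := ⟨fun i j h => ⟨h.1.symm, h.2.1.symm, h.2.2.2, h.2.2.1⟩⟩
  loopless := ⟨fun i h => h.1 rfl⟩

def term' [Fintype I] (f : I → ℝ) (c δ : ℝ) (g : SimpleGraph I) (i j : I) : ℝ :=
  (if j ≠ i ∧ g.Reachable i j then δ ^ (g.dist i j - 1) * f j else 0)
    - (if g.Adj i j then c else 0)

lemma payoff_eq_sum [Fintype I] (f : I → ℝ) (c δ : ℝ) (g : SimpleGraph I) (i : I) :
    payoff f c δ g i = ∑ j, term' f c δ g i j := by
  unfold payoff term'
  rw [Finset.sum_sub_distrib, Finset.sum_filter]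
  congr 1
  rw [Finset.card_filter]
  push_cast
  rw [Finset.sum_mul]
  simp [ite_mul]

lemma term_top [Fintype I] (f : I → ℝ) (c δ : ℝ) (i j : I) :
    term' f c δ (⊤ : SimpleGraph I) i j = if j ≠ i then f j - c else 0 := by
  unfold term'
  by_cases hij : j = i
  · simp [hij]
  · have hadj : (⊤ : SimpleGraph I).Adj i j := by simp [Ne.symm hij]
    have hd : (⊤ : SimpleGraph I).dist i j = 1 :=
      SimpleGraph.dist_eq_one_iff_adj.mpr hadj
    simp [hij, hadj, hd, hadj.reachable]

lemma term_le [Fintype I] {f : I → ℝ} {fβ c δ : ℝ}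
    (hf : ∀ j, fβ ≤ f j) (hfβ : 0 < fβ) (hδ0 : 0 < δ) (hδ1 : δ < 1)
    (h : c < (1 - δ) * fβ) (g : SimpleGraph I) (i j : I) :
    term' f c δ g i j ≤ term' f c δ (⊤ : SimpleGraph I) i j ∧
      (j ≠ i → ¬ g.Adj i j → term' f c δ g i j < term' f c δ (⊤ : SimpleGraph I) i j) := by
  have hfj : 0 < f j := lt_of_lt_of_le hfβ (hf j)
  have hcfj : c < (1 - δ) * f j :=
    lt_of_lt_of_le h (mul_le_mul_of_nonneg_left (hf j) (by linarith))
  rw [term_top]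
  by_cases hadj : g.Adj i j
  · have hij : j ≠ i := hadj.ne'
    have hd : g.dist i j = 1 := SimpleGraph.dist_eq_one_iff_adj.mpr hadj
    unfold term'
    rw [if_pos ⟨hij, hadj.reachable⟩, if_pos hadj, if_pos hij, hd]
    constructor
    · simp
    · intro _ h'; exact absurd hadj h'
  · by_cases hij : j = i
    · subst hij
      constructor
      · unfold term'; simp [hadj, g.loopless]
      · intro h'; exact absurd rfl h'
    · have key : term' f c δ g i j < f j - c := by
        unfold term'
        rw [if_neg hadj]
        by_cases hr : g.Reachable i j
        · rw [if_pos ⟨hij, hr⟩]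
          have hd0 : g.dist i j ≠ 0 := fun hh => by
            rcases SimpleGraph.dist_eq_zero_iff_eq_or_not_reachable.mp hh with h1 | h1
            · exact hij h1.symm
            · exact h1 hr
          have hd1 : g.dist i j ≠ 1 := fun hh =>
            hadj (SimpleGraph.dist_eq_one_iff_adj.mp hh)
          have hd2 : 2 ≤ g.dist i j := by omega
          have hpow : δ ^ (g.dist i j - 1) ≤ δ := by
            calc δ ^ (g.dist i j - 1) ≤ δ ^ 1 :=
                  pow_le_pow_of_le_one (le_of_lt hδ0) (le_of_lt hδ1) (by omega)
              _ = δ := pow_one δ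
          have : δ ^ (g.dist i j - 1) * f j ≤ δ * f j :=
            mul_le_mul_of_nonneg_right hpow (le_of_lt hfj)
          nlinarith
        · rw [if_neg (by tauto)]
          nlinarith
      rw [if_pos hij]
      exact ⟨by linarith [key], fun _ _ => by linarith [key]⟩

/-- Theorem 2(a): if `(1−δ)·fβ > c`, the complete network is the unique
strongly efficient network. -/
theorem thm2a {I : Type*} [Fintype I] [DecidableEq I]
    (A : Finset I) (fα fβ c δ : ℝ)
    (hA : 1 ≤ A.card) (hB : 1 ≤ Aᶜ.card)
    (hfαβ : fβ < fα) (hfβ : 0 < fβ) (hc : 0 < c)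
    (hδ0 : 0 < δ) (hδ1 : δ < 1)
    (h : (1 - δ) * fβ > c) :
    StronglyEfficient (fTheta A fα fβ) c δ (⊤ : SimpleGraph I) ∧
      ∀ g : SimpleGraph I, StronglyEfficient (fTheta A fα fβ) c δ g → g = ⊤ := by
  set f := fTheta A fα fβ with hfdef
  have hf : ∀ j, fβ ≤ f j := by
    intro j
    unfold f
    unfold fTheta
    split <;> linarith
  have hle : ∀ g : SimpleGraph I, totalPayoff f c δ g ≤ totalPayoff f c δ ⊤ := by
    intro g
    unfold totalPayoff
    refine Finset.sum_le_sum fun i _ => ?_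
    rw [payoff_eq_sum, payoff_eq_sum]
    exact Finset.sum_le_sum fun j _ => (term_le hf hfβ hδ0 hδ1 h g i j).1
  have hlt : ∀ g : SimpleGraph I, g ≠ ⊤ →
      totalPayoff f c δ g < totalPayoff f c δ ⊤ := by
    intro g hg
    obtain ⟨i, j, hij, hadj⟩ : ∃ i j, j ≠ i ∧ ¬ g.Adj i j := by
      by_contra hcon
      push_neg at hcon
      apply hg
      ext x y
      simp only [SimpleGraph.top_adj]
      exact ⟨fun hh => hh.ne, fun hh => hcon x y (Ne.symm hh)⟩
    unfold totalPayoff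
    refine Finset.sum_lt_sum (fun i _ => ?_) ⟨i, Finset.mem_univ i, ?_⟩
    · rw [payoff_eq_sum, payoff_eq_sum]
      exact Finset.sum_le_sum fun j _ => (term_le hf hfβ hδ0 hδ1 h g i j).1
    · rw [payoff_eq_sum, payoff_eq_sum]
      refine Finset.sum_lt_sum (fun j _ => (term_le hf hfβ hδ0 hδ1 h g i j).1)
        ⟨j, Finset.mem_univ j, (term_le hf hfβ hδ0 hδ1 h g i j).2 hij hadj⟩
  refine ⟨hle, fun g hgse => ?_⟩
  by_contra hg
  exact absurd (hgse ⊤) (not_le.mpr (hlt g hg))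
end
end

section
/- Theorem 2(d): If (1−δ)·f_α > c > (1−δ)·(f_α+f_β)/2 and (1+δ(n_α−1))·f_α + (1+δ(n_α+n_β−2))·f_β < 2c, then the unique strongly efficient network is the graph whose edges are exactly all pairs of distinct type-α agents (a clique on A, with every type-β agent a singleton). -/
open Finset

noncomputable section

open scoped Classical

variable {I : Type*}

section Thm2dAux

variable [Fintype I] [DecidableEq I]

/-- Contribution of the ordered pair `(i,j)` to the total payoff. -/
def contrib (f : I → ℝ) (c δ : ℝ) (g : SimpleGraph I) (i j : I) : ℝ :=
  (if g.Reachable i j then δ ^ (g.dist i j - 1) * f j else 0)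
    - (if g.Adj i j then c else 0)

lemma payoff_eq_contrib (f : I → ℝ) (c δ : ℝ) (g : SimpleGraph I) (i : I) :
    payoff f c δ g i = ∑ j ∈ univ.erase i, contrib f c δ g i j := by
  unfold payoff
  rw [Finset.sum_filter, ← nsmul_eq_mul, ← Finset.sum_const, Finset.sum_filter,
    ← Finset.sum_sub_distrib, ← Finset.sum_erase_add _ _ (Finset.mem_univ i)]
  rw [if_neg (g.irrefl (v := i)), if_neg (by simp : ¬(i ≠ i ∧ g.Reachable i i)),
    sub_zero, add_zero]
  refine Finset.sum_congr rfl fun j hj => ?_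
  have hji : j ≠ i := (Finset.mem_erase.1 hj).1
  simp [contrib, hji]

lemma totalPayoff_eq_contrib (f : I → ℝ) (c δ : ℝ) (g : SimpleGraph I) :
    totalPayoff f c δ g = ∑ i, ∑ j ∈ univ.erase i, contrib f c δ g i j :=
  Finset.sum_congr rfl fun i _ => payoff_eq_contrib f c δ g i

/-- The "share" of a type-β agent `j`: its pairs with type-α agents (both
directions) and its outgoing pairs towards other type-β agents. -/
def shareB (A : Finset I) (f : I → ℝ) (c δ : ℝ) (g : SimpleGraph I) (j : I) : ℝ :=
  (∑ i ∈ A, (contrib f c δ g i j + contrib f c δ g j i))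
    + ∑ i ∈ Aᶜ.erase j, contrib f c δ g j i

lemma totalPayoff_decomp (A : Finset I) (f : I → ℝ) (c δ : ℝ) (g : SimpleGraph I) :
    totalPayoff f c δ g
      = (∑ i ∈ A, ∑ j ∈ A.erase i, contrib f c δ g i j)
        + ∑ j ∈ Aᶜ, shareB A f c δ g j := by
  have hsplit : ∀ (i : I) (F : I → ℝ),
      ∑ j ∈ univ.erase i, F j = (∑ j ∈ A.erase i, F j) + ∑ j ∈ Aᶜ.erase i, F j := by
    intro i F
    rw [← Finset.sum_filter_add_sum_filter_not (univ.erase i) (· ∈ A)]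
    congr 1
    · congr 1; ext j; simp [Finset.mem_erase, and_comm]
    · congr 1; ext j; simp [Finset.mem_erase, and_comm]
  rw [totalPayoff_eq_contrib, ← Finset.sum_add_sum_compl A]
  have e1 : ∑ i ∈ A, ∑ j ∈ univ.erase i, contrib f c δ g i j
      = ∑ i ∈ A, ((∑ j ∈ A.erase i, contrib f c δ g i j)
          + ∑ j ∈ Aᶜ, contrib f c δ g i j) := by
    refine Finset.sum_congr rfl fun i hi => ?_
    rw [hsplit i, Finset.erase_eq_of_notMem (s := Aᶜ) (a := i) (by simp [hi])]
  have e2 : ∑ i ∈ Aᶜ, ∑ j ∈ univ.erase i, contrib f c δ g i j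
      = ∑ i ∈ Aᶜ, ((∑ j ∈ A, contrib f c δ g i j)
          + ∑ j ∈ Aᶜ.erase i, contrib f c δ g i j) := by
    refine Finset.sum_congr rfl fun i hi => ?_
    rw [hsplit i, Finset.erase_eq_of_notMem (s := A) (a := i) (Finset.mem_compl.1 hi)]
  rw [e1, e2]
  unfold shareB
  simp only [Finset.sum_add_distrib]
  rw [Finset.sum_comm (s := A) (t := Aᶜ)]
  ring

lemma reachable_exists_adj {g : SimpleGraph I} {u v : I} (h : g.Reachable u v)
    (hne : u ≠ v) : ∃ w, g.Adj u w := by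
  obtain ⟨p⟩ := h
  cases p with
  | nil => exact absurd rfl hne
  | cons h _ => exact ⟨_, h⟩

lemma contrib_eq_zero_isolated {f : I → ℝ} {c δ : ℝ} {g : SimpleGraph I} {j : I}
    (hj : ∀ i, ¬ g.Adj j i) {i : I} (hij : i ≠ j) :
    contrib f c δ g i j = 0 ∧ contrib f c δ g j i = 0 := by
  have hnr : ¬ g.Reachable j i := by
    intro hr
    obtain ⟨w, hw⟩ := reachable_exists_adj hr (Ne.symm hij)
    exact hj w hw
  have hnr' : ¬ g.Reachable i j := fun hr => hnr hr.symm
  have hna' : ¬ g.Adj j i := hj i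
  have hna : ¬ g.Adj i j := fun h => hna' h.symm
  constructor <;> simp [contrib, hnr, hnr', hna, hna']

lemma cliqueOn_not_adj {A : Finset I} {j : I} (hj : j ∉ A) (i : I) :
    ¬ (cliqueOn A).Adj j i :=
  fun h => hj h.2.1

lemma contrib_cliqueOn {A : Finset I} {fα fβ c δ : ℝ} {i j : I}
    (hi : i ∈ A) (hj : j ∈ A) (hij : i ≠ j) :
    contrib (fTheta A fα fβ) c δ (cliqueOn A) i j = fα - c := by
  have hadj : (cliqueOn A).Adj i j := ⟨hij, hi, hj⟩
  have hd : (cliqueOn A).dist i j = 1 := SimpleGraph.dist_eq_one_iff_adj.2 hadj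
  simp [contrib, hadj.reachable, hadj, hd, fTheta, hj]

end Thm2dAux

set_option maxHeartbeats 1600000

/-- Theorem 2(d): the unique strongly efficient network is the clique on the
type-α agents, with every type-β agent a singleton. -/
theorem thm2d {I : Type*} [Fintype I] [DecidableEq I]
    (A : Finset I) (fα fβ c δ : ℝ)
    (hA : 1 ≤ A.card) (hB : 1 ≤ Aᶜ.card)
    (hfαβ : fβ < fα) (hfβ : 0 < fβ) (hc : 0 < c)
    (hδ0 : 0 < δ) (hδ1 : δ < 1)
    (h1 : (1 - δ) * fα > c) (h2 : c > (1 - δ) * ((fα + fβ) / 2))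
    (h3 : (1 + δ * ((A.card : ℝ) - 1)) * fα + (1 + δ * ((A.card : ℝ) + (Aᶜ.card : ℝ) - 2)) * fβ < 2 * c) :
    StronglyEfficient (fTheta A fα fβ) c δ (cliqueOn A) ∧
      ∀ g : SimpleGraph I, StronglyEfficient (fTheta A fα fβ) c δ g → g = cliqueOn A := by
  classical
  set f := fTheta A fα fβ with hf
  have hfα : 0 < fα := lt_trans hfβ hfαβ
  have hcfα : c < fα := by nlinarith [mul_pos hδ0 hfα]
  -- pointwise bound for pairs inside A
  have contribA : ∀ g : SimpleGraph I, ∀ i ∈ A, ∀ j ∈ A, i ≠ j →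
      contrib f c δ g i j ≤ fα - c ∧ (¬ g.Adj i j → contrib f c δ g i j < fα - c) := by
    intro g i hi j hj hij
    have hfj : f j = fα := if_pos hj
    by_cases hadj : g.Adj i j
    · have hd : g.dist i j = 1 := SimpleGraph.dist_eq_one_iff_adj.2 hadj
      refine ⟨?_, fun h => absurd hadj h⟩
      simp [contrib, hadj.reachable, hadj, hd, hfj]
    · have hlt : contrib f c δ g i j < fα - c := by
        by_cases hr : g.Reachable i j
        · have hd1 : 0 < g.dist i j := hr.pos_dist_of_ne hij
          have hd2 : g.dist i j ≠ 1 := fun h => hadj (SimpleGraph.dist_eq_one_iff_adj.1 h)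
          have hp : δ ^ (g.dist i j - 1) ≤ δ := by
            calc δ ^ (g.dist i j - 1) ≤ δ ^ 1 :=
                  pow_le_pow_of_le_one hδ0.le hδ1.le (by omega)
              _ = δ := pow_one δ
          rw [contrib, if_pos hr, if_neg hadj, hfj, sub_zero]
          nlinarith [mul_le_mul_of_nonneg_right hp hfα.le]
        · rw [contrib, if_neg hr, if_neg hadj, sub_zero]
          nlinarith
      exact ⟨hlt.le, fun _ => hlt⟩
  -- bound for mixed pairs (i ∈ A, j ∉ A), both directions combined
  have pairAB : ∀ g : SimpleGraph I, ∀ i ∈ A, ∀ j, j ∉ A →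
      (contrib f c δ g i j + contrib f c δ g j i ≤ δ * (fα + fβ))
      ∧ (g.Adj j i → contrib f c δ g i j + contrib f c δ g j i ≤ (fα + fβ) - 2*c) := by
    intro g i hi j hj
    have hij : i ≠ j := fun h => hj (h ▸ hi)
    have hfj : f j = fβ := if_neg hj
    have hfi : f i = fα := if_pos hi
    have hδβ : fα + fβ - 2*c < δ * (fα + fβ) := by nlinarith
    by_cases hadj : g.Adj i j
    · have hd : g.dist i j = 1 := SimpleGraph.dist_eq_one_iff_adj.2 hadj
      have hd' : g.dist j i = 1 := by rw [SimpleGraph.dist_comm]; exact hd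
      have heq : contrib f c δ g i j + contrib f c δ g j i = (fα + fβ) - 2*c := by
        rw [contrib, contrib, if_pos hadj.reachable, if_pos hadj.symm.reachable,
          if_pos hadj, if_pos hadj.symm, hd, hd', hfi, hfj]
        ring
      exact ⟨by rw [heq]; linarith, fun _ => le_of_eq heq⟩
    · have hadj' : ¬ g.Adj j i := fun h => hadj h.symm
      refine ⟨?_, fun h => absurd h hadj'⟩
      by_cases hr : g.Reachable i j
      · have hd1 : 0 < g.dist i j := hr.pos_dist_of_ne hij
        have hd2 : g.dist i j ≠ 1 := fun h => hadj (SimpleGraph.dist_eq_one_iff_adj.1 h)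
        have hp : δ ^ (g.dist i j - 1) ≤ δ := by
          calc δ ^ (g.dist i j - 1) ≤ δ ^ 1 :=
                pow_le_pow_of_le_one hδ0.le hδ1.le (by omega)
            _ = δ := pow_one δ
        rw [contrib, contrib, if_pos hr, if_pos hr.symm, if_neg hadj, if_neg hadj',
          SimpleGraph.dist_comm (u := j) (v := i), hfi, hfj, sub_zero, sub_zero]
        nlinarith [mul_le_mul_of_nonneg_right hp hfα.le,
          mul_le_mul_of_nonneg_right hp hfβ.le]
      · have hr' : ¬ g.Reachable j i := fun h => hr h.symm
        rw [contrib, contrib, if_neg hr, if_neg hr', if_neg hadj, if_neg hadj',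
          sub_zero]
        nlinarith [mul_pos hδ0 hfα, mul_pos hδ0 hfβ]
  -- bound for the outgoing pairs of j ∉ A towards other agents outside A
  have pairBB : ∀ g : SimpleGraph I, ∀ j, j ∉ A → ∀ i, i ∉ A → i ≠ j →
      (contrib f c δ g j i ≤ δ * fβ)
      ∧ (g.Adj j i → contrib f c δ g j i ≤ fβ - c) := by
    intro g j hj i hi hij
    have hfi : f i = fβ := if_neg hi
    have hδβ : fβ - c < δ * fβ := by nlinarith
    by_cases hadj : g.Adj j i
    · have hd : g.dist j i = 1 := SimpleGraph.dist_eq_one_iff_adj.2 hadj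
      have heq : contrib f c δ g j i = fβ - c := by
        rw [contrib, if_pos hadj.reachable, if_pos hadj, hd, hfi]; simp
      exact ⟨by rw [heq]; linarith, fun _ => le_of_eq heq⟩
    · refine ⟨?_, fun h => absurd h hadj⟩
      by_cases hr : g.Reachable j i
      · have hd1 : 0 < g.dist j i := hr.pos_dist_of_ne (Ne.symm hij)
        have hd2 : g.dist j i ≠ 1 := fun h => hadj (SimpleGraph.dist_eq_one_iff_adj.1 h)
        have hp : δ ^ (g.dist j i - 1) ≤ δ := by
          calc δ ^ (g.dist j i - 1) ≤ δ ^ 1 :=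
                pow_le_pow_of_le_one hδ0.le hδ1.le (by omega)
            _ = δ := pow_one δ
        rw [contrib, if_pos hr, if_neg hadj, hfi, sub_zero]
        nlinarith [mul_le_mul_of_nonneg_right hp hfβ.le]
      · rw [contrib, if_neg hr, if_neg hadj, sub_zero]
        nlinarith [mul_pos hδ0 hfβ]
  -- a β-agent with no links has zero share
  have hshare0 : ∀ g : SimpleGraph I, ∀ j, j ∉ A → (∀ i, ¬ g.Adj j i) →
      shareB A f c δ g j = 0 := by
    intro g j hj hnb
    rw [shareB, Finset.sum_eq_zero, Finset.sum_eq_zero, add_zero]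
    · intro i hi
      exact (contrib_eq_zero_isolated hnb (Finset.ne_of_mem_erase hi)).2
    · intro i hi
      have hij : i ≠ j := fun h => hj (h ▸ hi)
      have h := contrib_eq_zero_isolated (f := f) (c := c) (δ := δ) hnb hij
      rw [h.1, h.2, add_zero]
  -- casts
  have hca : ((A.card - 1 : ℕ) : ℝ) = (A.card : ℝ) - 1 := by
    rw [Nat.cast_sub hA]; norm_num
  have hcb : ((Aᶜ.card - 1 : ℕ) : ℝ) = (Aᶜ.card : ℝ) - 1 := by
    rw [Nat.cast_sub hB]; norm_num
  -- the share of each β-agent is nonpositive, strictly if it has a link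
  have key1 : ((fα + fβ) - 2*c) + (((A.card : ℝ) - 1)) * (δ * (fα + fβ))
      + (((Aᶜ.card : ℝ) - 1)) * (δ * fβ) < 0 := by nlinarith [h3]
  have key2 : ((A.card : ℝ)) * (δ * (fα + fβ))
      + ((fβ - c) + (((Aᶜ.card : ℝ) - 2)) * (δ * fβ)) < 0 := by nlinarith [h3, h1]
  have shareB_le : ∀ g : SimpleGraph I, ∀ j, j ∉ A →
      shareB A f c δ g j ≤ 0 ∧ ((∃ i, g.Adj j i) → shareB A f c δ g j < 0) := by
    intro g j hj
    by_cases hnb : ∃ i, g.Adj j i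
    · obtain ⟨i₀, hadj⟩ := hnb
      have hlt : shareB A f c δ g j < 0 := by
        by_cases hi₀ : i₀ ∈ A
        · have hsumA : ∑ i ∈ A, (contrib f c δ g i j + contrib f c δ g j i)
              ≤ ((fα + fβ) - 2*c) + ((A.card - 1 : ℕ) : ℝ) * (δ * (fα + fβ)) := by
            rw [← Finset.add_sum_erase A _ hi₀]
            refine add_le_add ((pairAB g i₀ hi₀ j hj).2 hadj) ?_
            have h := Finset.sum_le_card_nsmul (A.erase i₀) _ (δ * (fα + fβ))
              (fun i hi => (pairAB g i (Finset.mem_of_mem_erase hi) j hj).1)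
            rwa [Finset.card_erase_of_mem hi₀, nsmul_eq_mul] at h
          have hsumB : ∑ i ∈ Aᶜ.erase j, contrib f c δ g j i
              ≤ ((Aᶜ.card - 1 : ℕ) : ℝ) * (δ * fβ) := by
            have h := Finset.sum_le_card_nsmul (Aᶜ.erase j) _ (δ * fβ)
              (fun i hi => (pairBB g j hj i
                (Finset.mem_compl.1 (Finset.mem_of_mem_erase hi))
                (Finset.ne_of_mem_erase hi)).1)
            rwa [Finset.card_erase_of_mem (Finset.mem_compl.2 hj), nsmul_eq_mul] at h
          rw [hca] at hsumA
          rw [hcb] at hsumB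
          rw [shareB]
          linarith [hsumA, hsumB, key1]
        · have hi₀' : i₀ ∈ Aᶜ.erase j :=
            Finset.mem_erase.2 ⟨hadj.ne', Finset.mem_compl.2 hi₀⟩
          have hb2 : 2 ≤ Aᶜ.card := by
            refine Finset.one_lt_card.2 ⟨i₀, Finset.mem_compl.2 hi₀, j, Finset.mem_compl.2 hj, hadj.ne'⟩
          have hsumA : ∑ i ∈ A, (contrib f c δ g i j + contrib f c δ g j i)
              ≤ (A.card : ℝ) * (δ * (fα + fβ)) := by
            have h := Finset.sum_le_card_nsmul A _ (δ * (fα + fβ))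
              (fun i hi => (pairAB g i hi j hj).1)
            rwa [nsmul_eq_mul] at h
          have hsumB : ∑ i ∈ Aᶜ.erase j, contrib f c δ g j i
              ≤ (fβ - c) + ((Aᶜ.card : ℝ) - 2) * (δ * fβ) := by
            rw [← Finset.add_sum_erase _ _ hi₀']
            refine add_le_add ((pairBB g j hj i₀ hi₀ hadj.ne').2 hadj) ?_
            have h := Finset.sum_le_card_nsmul ((Aᶜ.erase j).erase i₀) _ (δ * fβ)
              (fun i hi => (pairBB g j hj i
                (Finset.mem_compl.1 (Finset.mem_of_mem_erase (Finset.mem_of_mem_erase hi)))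
                (Finset.ne_of_mem_erase (Finset.mem_of_mem_erase hi))).1)
            rw [Finset.card_erase_of_mem hi₀', Finset.card_erase_of_mem (Finset.mem_compl.2 hj),
              Nat.sub_sub, nsmul_eq_mul, Nat.cast_sub hb2] at h
            convert h using 2 <;> norm_num
          rw [shareB]
          linarith [hsumA, hsumB, key2]
      exact ⟨hlt.le, fun _ => hlt⟩
    · push_neg at hnb
      have hz := hshare0 g j hj hnb
      exact ⟨le_of_eq hz, fun h => absurd h (by push_neg; exact hnb)⟩
  -- decomposition and comparison with the clique
  have hν : ∀ g : SimpleGraph I, totalPayoff f c δ g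
      = (∑ i ∈ A, ∑ j ∈ A.erase i, contrib f c δ g i j)
        + ∑ j ∈ Aᶜ, shareB A f c δ g j :=
    fun g => totalPayoff_decomp A f c δ g
  have hshare_clique : ∑ j ∈ Aᶜ, shareB A f c δ (cliqueOn A) j = 0 :=
    Finset.sum_eq_zero fun j hjm =>
      hshare0 (cliqueOn A) j (Finset.mem_compl.1 hjm)
        (cliqueOn_not_adj (Finset.mem_compl.1 hjm))
  have hSAA_le : ∀ g : SimpleGraph I,
      (∑ i ∈ A, ∑ j ∈ A.erase i, contrib f c δ g i j)
        ≤ ∑ i ∈ A, ∑ j ∈ A.erase i, contrib f c δ (cliqueOn A) i j := by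
    intro g
    refine Finset.sum_le_sum fun i hi => Finset.sum_le_sum fun j hjm => ?_
    have hjA : j ∈ A := Finset.mem_of_mem_erase hjm
    have hij : i ≠ j := (Finset.ne_of_mem_erase hjm).symm
    rw [contrib_cliqueOn hi hjA hij]
    exact (contribA g i hi j hjA hij).1
  have hSh_le : ∀ g : SimpleGraph I, ∑ j ∈ Aᶜ, shareB A f c δ g j ≤ 0 := by
    intro g
    exact Finset.sum_nonpos fun j hjm => (shareB_le g j (Finset.mem_compl.1 hjm)).1
  have hle : ∀ g : SimpleGraph I, totalPayoff f c δ g ≤ totalPayoff f c δ (cliqueOn A) := by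
    intro g
    rw [hν g, hν (cliqueOn A), hshare_clique]
    have := hSAA_le g
    have := hSh_le g
    linarith
  have hlt : ∀ g : SimpleGraph I, g ≠ cliqueOn A →
      totalPayoff f c δ g < totalPayoff f c δ (cliqueOn A) := by
    intro g hne
    have hdiff : ∃ i j, ¬ (g.Adj i j ↔ (cliqueOn A).Adj i j) := by
      by_contra hc'
      push_neg at hc'
      exact hne (by ext i j; exact hc' i j)
    obtain ⟨i, j, hij⟩ := hdiff
    rw [hν g, hν (cliqueOn A), hshare_clique]
    by_cases hg : g.Adj i j
    · have hcl : ¬ (cliqueOn A).Adj i j := fun h => hij ⟨fun _ => h, fun _ => hg⟩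
      have hout : i ∉ A ∨ j ∉ A := by
        by_contra hc'
        push_neg at hc'
        exact hcl ⟨hg.ne, hc'.1, hc'.2⟩
      have hβ : ∃ k, k ∉ A ∧ ∃ m, g.Adj k m := by
        rcases hout with h | h
        · exact ⟨i, h, j, hg⟩
        · exact ⟨j, h, i, hg.symm⟩
      obtain ⟨k, hk, hknb⟩ := hβ
      have hstrict : ∑ j' ∈ Aᶜ, shareB A f c δ g j' < 0 := by
        have h := Finset.sum_lt_sum (s := Aᶜ) (f := shareB A f c δ g)
          (g := fun _ => (0:ℝ))
          (fun x hx => (shareB_le g x (Finset.mem_compl.1 hx)).1)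
          ⟨k, Finset.mem_compl.2 hk, (shareB_le g k hk).2 hknb⟩
        simpa using h
      have := hSAA_le g
      linarith
    · have hcl : (cliqueOn A).Adj i j := by
        by_contra hc'
        exact hij ⟨fun h => absurd h hg, fun h => absurd h hc'⟩
      obtain ⟨hij', hiA, hjA⟩ := hcl
      have hstrict : (∑ i' ∈ A, ∑ j' ∈ A.erase i', contrib f c δ g i' j')
          < ∑ i' ∈ A, ∑ j' ∈ A.erase i', contrib f c δ (cliqueOn A) i' j' := by
        refine Finset.sum_lt_sum
          (fun i' hi' => Finset.sum_le_sum fun j' hj' => ?_) ⟨i, hiA, ?_⟩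
        · have hjA' : j' ∈ A := Finset.mem_of_mem_erase hj'
          have hij'' : i' ≠ j' := (Finset.ne_of_mem_erase hj').symm
          rw [contrib_cliqueOn hi' hjA' hij'']
          exact (contribA g i' hi' j' hjA' hij'').1
        · refine Finset.sum_lt_sum (fun j' hj' => ?_)
            ⟨j, Finset.mem_erase.2 ⟨hij'.symm, hjA⟩, ?_⟩
          · have hjA' : j' ∈ A := Finset.mem_of_mem_erase hj'
            have hij'' : i ≠ j' := (Finset.ne_of_mem_erase hj').symm
            rw [contrib_cliqueOn hiA hjA' hij'']
            exact (contribA g i hiA j' hjA' hij'').1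
          · rw [contrib_cliqueOn hiA hjA hij']
            exact (contribA g i hiA j hjA hij').2 hg
      have := hSh_le g
      linarith
  refine ⟨fun g' => hle g', fun g hg => ?_⟩
  by_contra hne
  have h1' := hg (cliqueOn A)
  have h2' := hlt g hne
  linarith
end
end

section
/- Theorem 2(f): Suppose n_α ≥ 2. If (1−δ)·f_α < c and (1+δ(n_α−1))·f_α + (1+δ(n_α+n_β−2))·f_β < 2c < f_α·(2+δ(n_α−2)), then a network g is strongly efficient if and only if there exists a type-α agent i₀ ∈ A such that the edge set of g is exactly {{i₀, j} : j ∈ A, j ≠ i₀} (a star encompassing every type-α agent with a type-α center, with every type-β agent a singleton). -/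
open Finset

noncomputable section

open scoped Classical

variable {I : Type*}

section AuxProof

section Graph1
open SimpleGraph

lemma reach_surgery {g : SimpleGraph I} {u v x y : I} (h : g.Reachable x y) :
    (g.deleteEdges {s(u,v)}).Reachable x y ∨
      (((g.deleteEdges {s(u,v)}).Reachable x u ∨ (g.deleteEdges {s(u,v)}).Reachable x v) ∧
       ((g.deleteEdges {s(u,v)}).Reachable u y ∨ (g.deleteEdges {s(u,v)}).Reachable v y)) := by
  set g' := g.deleteEdges {s(u,v)} with hg'
  obtain ⟨w⟩ := h
  induction w with
  | nil => exact Or.inl (Reachable.refl _)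
  | @cons x z y hxz p ih =>
    by_cases he : s(x, z) = s(u, v)
    · rw [Sym2.eq_iff] at he
      rcases he with ⟨rfl, rfl⟩ | ⟨rfl, rfl⟩
      · refine Or.inr ⟨Or.inl (Reachable.refl _), ?_⟩
        rcases ih with h' | ⟨_, hy⟩
        · exact Or.inr h'
        · exact hy
      · refine Or.inr ⟨Or.inr (Reachable.refl _), ?_⟩
        rcases ih with h' | ⟨_, hy⟩
        · exact Or.inl h'
        · exact hy
    · have hadj : g'.Adj x z := by
        rw [hg', SimpleGraph.deleteEdges_adj]
        exact ⟨hxz, by simpa using he⟩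
      rcases ih with h' | ⟨hz, hy⟩
      · exact Or.inl (hadj.reachable.trans h')
      · exact Or.inr ⟨hz.imp (fun t => hadj.reachable.trans t) (fun t => hadj.reachable.trans t), hy⟩

variable [Fintype I] [DecidableEq I]

instance (priority := 10000) ccFintype (g : SimpleGraph I) : Fintype g.ConnectedComponent :=
  haveI : Finite g.ConnectedComponent :=
    Finite.of_surjective g.connectedComponentMk (fun C => C.exists_rep)
  Fintype.ofFinite _

lemma card_cc_deleteEdge (g : SimpleGraph I) (u v : I) :
    Fintype.card (g.deleteEdges {s(u,v)}).ConnectedComponent ≤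
      Fintype.card g.ConnectedComponent + 1 := by
  classical
  set g' := g.deleteEdges {s(u,v)} with hg'
  have hle : g' ≤ g := SimpleGraph.deleteEdges_le _
  set φ : g'.ConnectedComponent → g.ConnectedComponent :=
    SimpleGraph.ConnectedComponent.map (SimpleGraph.Hom.ofLE hle) with hφ
  have hinj : Set.InjOn φ (univ.erase (g'.connectedComponentMk v) : Finset _) := by
    intro C hC D hD hCD
    obtain ⟨x, rfl⟩ := C.exists_rep
    obtain ⟨y, rfl⟩ := D.exists_rep
    simp only [hφ, SimpleGraph.ConnectedComponent.map_mk] at hCD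
    have hr : g.Reachable x y := SimpleGraph.ConnectedComponent.exact hCD
    rcases reach_surgery (u := u) (v := v) hr with h' | ⟨hx, hy⟩
    · exact SimpleGraph.ConnectedComponent.sound h'
    · have hCne := Finset.ne_of_mem_erase (Finset.mem_coe.mp hC)
      have hDne := Finset.ne_of_mem_erase (Finset.mem_coe.mp hD)
      have hxu : g'.Reachable x u := by
        rcases hx with h | h
        · exact h
        · exact absurd (SimpleGraph.ConnectedComponent.sound h) hCne
      have hyu : g'.Reachable u y := by
        rcases hy with h | h
        · exact h
        · exact absurd (SimpleGraph.ConnectedComponent.sound h.symm) hDne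
      exact SimpleGraph.ConnectedComponent.sound (hxu.trans hyu)
  have h1 : (univ.erase (g'.connectedComponentMk v)).card ≤ Fintype.card g.ConnectedComponent := by
    have := Finset.card_le_card_of_injOn φ (fun a _ => Finset.mem_univ (φ a)) hinj
    rwa [Finset.card_univ] at this
  have h2 : (univ.erase (g'.connectedComponentMk v)).card
      = Fintype.card g'.ConnectedComponent - 1 := by
    rw [Finset.card_erase_of_mem (Finset.mem_univ _), Finset.card_univ]
  have h3 : 1 ≤ Fintype.card g'.ConnectedComponent :=
    Fintype.card_pos_iff.mpr ⟨g'.connectedComponentMk v⟩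
  omega

lemma card_le_edge_cc : ∀ (n : ℕ) (g : SimpleGraph I), g.edgeFinset.card = n →
    Fintype.card I ≤ n + Fintype.card g.ConnectedComponent := by
  intro n
  induction n with
  | zero =>
    intro g hg
    have hbot : g = ⊥ := SimpleGraph.edgeFinset_eq_empty.mp (Finset.card_eq_zero.mp hg)
    subst hbot
    have hinj : Function.Injective ((⊥ : SimpleGraph I).connectedComponentMk) := by
      intro a b hab
      exact SimpleGraph.reachable_bot.mp (SimpleGraph.ConnectedComponent.exact hab)
    simpa using Fintype.card_le_of_injective _ hinj
  | succ n ih =>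
    intro g hg
    have hne : g.edgeFinset.Nonempty := by
      rw [← Finset.card_pos, hg]; omega
    obtain ⟨e, he⟩ := hne
    induction e using Sym2.ind with
    | _ u v =>
    set g' := g.deleteEdges {s(u,v)} with hg'
    have hE : g'.edgeFinset = g.edgeFinset.erase (s(u,v)) := by
      ext e
      simp only [SimpleGraph.mem_edgeFinset, hg', SimpleGraph.edgeSet_deleteEdges,
        Finset.mem_erase, Set.mem_diff, Set.mem_singleton_iff]
      tauto
    have hcard : g'.edgeFinset.card = n := by
      rw [hE, Finset.card_erase_of_mem he, hg]; omega
    have h1 := ih g' (by convert hcard)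
    have h2 := card_cc_deleteEdge g u v
    rw [← hg'] at h2
    omega

end Graph1

section StarUnique
open SimpleGraph
variable [Fintype I] [DecidableEq I]

lemma mid_vertex {g : SimpleGraph I} {x y : I} (hne : x ≠ y) (hnadj : ¬ g.Adj x y)
    (hd : g.dist x y ≤ 2) (hr : g.Reachable x y) : ∃ z, g.Adj x z ∧ g.Adj z y := by
  have h0 := hr.pos_dist_of_ne hne
  have h1 : g.dist x y ≠ 1 := fun h => hnadj (SimpleGraph.dist_eq_one_iff_adj.mp h)
  have h2 : g.dist x y = 2 := by omega
  obtain ⟨p, hp⟩ := hr.exists_walk_length_eq_dist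
  rw [h2] at hp
  cases p with
  | nil => simp at hp
  | cons h q =>
    cases q with
    | nil => simp at hp
    | cons h' q' =>
      cases q' with
      | nil => exact ⟨_, h, h'⟩
      | cons h3 q'' => simp [SimpleGraph.Walk.length_cons] at hp

lemma star_unique (g : SimpleGraph I) (A : Finset I) (hA2 : 2 ≤ A.card)
    (hin : ∀ ⦃i j⦄, g.Adj i j → i ∈ A ∧ j ∈ A)
    (hreach : ∀ i ∈ A, ∀ j ∈ A, g.Reachable i j)
    (hdist : ∀ i ∈ A, ∀ j ∈ A, g.dist i j ≤ 2)
    (hcard : g.edgeFinset.card + 1 = A.card) :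
    ∃ i₀ ∈ A, g = starOn A i₀ := by
  obtain ⟨i₀, hi₀A, hmax⟩ := A.exists_max_image (fun v => g.degree v : I → ℕ) (Finset.card_pos.mp (by omega))
  set N := g.neighborFinset i₀ with hN
  have hNA : N ⊆ A := fun x hx => (hin ((SimpleGraph.mem_neighborFinset g i₀ x).mp hx)).2
  have hi₀N : i₀ ∉ N := by simp [hN]
  set NN := A \ insert i₀ N with hNNdef
  have hNNmem : ∀ {j}, j ∈ NN → j ∈ A ∧ j ≠ i₀ ∧ ¬ g.Adj i₀ j := by
    intro j hj
    rw [hNNdef, Finset.mem_sdiff, Finset.mem_insert, not_or] at hj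
    exact ⟨hj.1, hj.2.1, fun h => hj.2.2 ((SimpleGraph.mem_neighborFinset g i₀ j).mpr h)⟩
  have hNN_N : ∀ {j}, j ∈ NN → j ∉ N := by
    intro j hj
    rw [hNNdef, Finset.mem_sdiff, Finset.mem_insert, not_or] at hj
    exact hj.2.2
  have hex : ∀ j : I, ∃ x, j ∈ NN → g.Adj i₀ x ∧ g.Adj x j := by
    intro j
    by_cases hj : j ∈ NN
    · obtain ⟨hjA, hji, hnadj⟩ := hNNmem hj
      obtain ⟨z, hz1, hz2⟩ := mid_vertex (Ne.symm hji) hnadj (hdist _ hi₀A _ hjA)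
        (hreach _ hi₀A _ hjA)
      exact ⟨z, fun _ => ⟨hz1, hz2⟩⟩
    · exact ⟨i₀, fun h => absurd h hj⟩
  choose xj hxj using hex
  have hxjN : ∀ {j}, j ∈ NN → xj j ∈ N :=
    fun hj => (SimpleGraph.mem_neighborFinset g i₀ _).mpr (hxj _ hj).1
  set E' := g.edgeFinset.filter (fun e => i₀ ∉ e) with hE'
  have hDeg : (g.edgeFinset.filter (fun e => i₀ ∈ e)).card = g.degree i₀ := by
    rw [← SimpleGraph.card_incidenceFinset_eq_degree]
    congr 1
    rw [SimpleGraph.incidenceFinset_eq_filter]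
  have hE'card : g.degree i₀ + E'.card = g.edgeFinset.card := by
    rw [← hDeg, hE']
    exact Finset.card_filter_add_card_filter_not _
  set T := NN.image (fun j => s(xj j, j)) with hT
  have hTinj : Set.InjOn (fun j => s(xj j, j)) NN := by
    intro j hj j' hj' heq
    simp only [Sym2.eq_iff] at heq
    rcases heq with ⟨-, h2⟩ | ⟨h1, h2⟩
    · exact h2
    · exfalso
      exact (hNNmem (Finset.mem_coe.mp hj)).2.2 (by rw [h2]; exact (hxj j' (Finset.mem_coe.mp hj')).1)
  have hTcard : T.card = NN.card := Finset.card_image_of_injOn hTinj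
  have hi₀notmem : ∀ {j}, j ∈ NN → i₀ ∉ s(xj j, j) := by
    intro j hj hmem
    rw [Sym2.mem_iff] at hmem
    rcases hmem with h | h
    · exact ((hxj j hj).1.ne) h
    · exact (hNNmem hj).2.1 h.symm
  have hTsub : T ⊆ E' := by
    intro e he
    obtain ⟨j, hj, rfl⟩ := Finset.mem_image.mp he
    rw [hE', Finset.mem_filter, SimpleGraph.mem_edgeFinset, SimpleGraph.mem_edgeSet]
    exact ⟨(hxj j hj).2, hi₀notmem hj⟩
  have hNNcard : NN.card + (N.card + 1) = A.card := by
    rw [hNNdef, Finset.card_sdiff_of_subset (by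
      intro x hx
      rcases Finset.mem_insert.mp hx with rfl | hxN
      · exact hi₀A
      · exact hNA hxN)]
    rw [Finset.card_insert_of_notMem hi₀N]
    have hsub : insert i₀ N ⊆ A := by
      intro x hx
      rcases Finset.mem_insert.mp hx with rfl | hxN
      · exact hi₀A
      · exact hNA hxN
    have := Finset.card_le_card hsub
    rw [Finset.card_insert_of_notMem hi₀N] at this
    omega
  have hdegN : g.degree i₀ = N.card := (SimpleGraph.card_neighborFinset_eq_degree g i₀).symm
  have hTeq : T = E' := by
    apply Finset.eq_of_subset_of_card_le hTsub
    rw [hTcard]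
    omega
  -- every neighbour of j ∈ NN equals xj j
  have huniq : ∀ {j}, j ∈ NN → ∀ {y}, g.Adj y j → y = xj j := by
    intro j hj y hy
    have he' : s(y, j) ∈ E' := by
      rw [hE', Finset.mem_filter, SimpleGraph.mem_edgeFinset, SimpleGraph.mem_edgeSet]
      refine ⟨hy, ?_⟩
      rw [Sym2.mem_iff]
      rintro (rfl | rfl)
      · exact (hNNmem hj).2.2 hy
      · exact (hNNmem hj).2.1 rfl
    rw [← hTeq, hT] at he'
    obtain ⟨j', hj', heq⟩ := Finset.mem_image.mp he'
    rw [Sym2.eq_iff] at heq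
    rcases heq with ⟨h1, h2⟩ | ⟨h1, h2⟩
    · rw [h2] at h1
      exact h1.symm
    · exfalso
      exact (hNNmem hj).2.2 (h1 ▸ (hxj j' hj').1)
  -- no edges inside N
  have hNNedge : ∀ {y z}, y ∈ N → z ∈ N → ¬ g.Adj y z := by
    intro y z hyN hzN hadj
    have he' : s(y, z) ∈ E' := by
      rw [hE', Finset.mem_filter, SimpleGraph.mem_edgeFinset, SimpleGraph.mem_edgeSet]
      refine ⟨hadj, ?_⟩
      rw [Sym2.mem_iff]
      rintro (rfl | rfl)
      · exact hi₀N hyN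
      · exact hi₀N hzN
    rw [← hTeq, hT] at he'
    obtain ⟨j', hj', heq⟩ := Finset.mem_image.mp he'
    rw [Sym2.eq_iff] at heq
    rcases heq with ⟨h1, h2⟩ | ⟨h1, h2⟩
    · exact hNN_N hj' (h2 ▸ hzN)
    · exact hNN_N hj' (h2 ▸ hyN)
  by_cases hNNe : NN.Nonempty
  · exfalso
    obtain ⟨j, hj⟩ := hNNe
    have hxN : xj j ∈ N := hxjN hj
    have hNsing : N = {xj j} := by
      apply Finset.eq_singleton_iff_unique_mem.mpr
      refine ⟨hxN, ?_⟩
      intro y hyN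
      by_contra hne
      have hjA := (hNNmem hj).1
      have hyA := hNA hyN
      have hjy : j ≠ y := fun h => hNN_N hj (h ▸ hyN)
      have hnadj : ¬ g.Adj j y := by
        intro h
        exact hne ((huniq hj h.symm))
      obtain ⟨z, hz1, hz2⟩ := mid_vertex hjy hnadj (hdist _ hjA _ hyA) (hreach _ hjA _ hyA)
      have : z = xj j := huniq hj hz1.symm
      rw [this] at hz2
      exact hNNedge hxN hyN hz2
    -- max degree is 1
    have hdeg1 : g.degree i₀ = 1 := by rw [hdegN, hNsing, Finset.card_singleton]
    have hdegle : ∀ v, g.degree v ≤ 1 := by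
      intro v
      by_cases hv : v ∈ A
      · exact (hmax v hv).trans hdeg1.le
      · by_contra h
        push_neg at h
        have : 0 < g.degree v := by omega
        rw [← SimpleGraph.card_neighborFinset_eq_degree, Finset.card_pos] at this
        obtain ⟨w, hw⟩ := this
        exact hv (hin ((SimpleGraph.mem_neighborFinset g v w).mp hw)).1
    have hsum := SimpleGraph.sum_degrees_eq_twice_card_edges g
    have hsumle : ∑ v, g.degree v ≤ Fintype.card I := by
      calc ∑ v, g.degree v ≤ ∑ _v : I, 1 := Finset.sum_le_sum (fun v _ => hdegle v)
      _ = Fintype.card I := by simp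
    -- also degree 0 outside A, so sum over A
    have hAout : ∀ v, v ∉ A → g.degree v = 0 := by
      intro v hv
      by_contra h
      have : 0 < g.degree v := by omega
      rw [← SimpleGraph.card_neighborFinset_eq_degree, Finset.card_pos] at this
      obtain ⟨w, hw⟩ := this
      exact hv (hin ((SimpleGraph.mem_neighborFinset g v w).mp hw)).1
    have hsum2 : ∑ v, g.degree v = ∑ v ∈ A, g.degree v :=
      (Finset.sum_subset (Finset.subset_univ A) (fun x _ hx => hAout x hx)).symm
    have hsum3 : ∑ v ∈ A, g.degree v ≤ A.card := by
      calc ∑ v ∈ A, g.degree v ≤ ∑ _v ∈ A, 1 := Finset.sum_le_sum (fun v _ => hdegle v)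
      _ = A.card := by simp
    have hNNpos : 1 ≤ NN.card := Finset.card_pos.mpr ⟨j, hj⟩
    have hN1 : N.card = 1 := by rw [hNsing, Finset.card_singleton]
    omega
  · -- NN empty : star
    rw [Finset.not_nonempty_iff_eq_empty] at hNNe
    have hAsub : A ⊆ insert i₀ N := by
      rw [hNNdef] at hNNe
      exact Finset.sdiff_eq_empty_iff_subset.mp hNNe
    have hAeq : A = insert i₀ N := by
      apply Finset.Subset.antisymm hAsub
      intro x hx
      rcases Finset.mem_insert.mp hx with rfl | hxN
      · exact hi₀A
      · exact hNA hxN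
    have hNcard : N.card + 1 = A.card := by
      rw [hAeq, Finset.card_insert_of_notMem hi₀N]
    have hE'0 : E' = ∅ := by
      rw [← hTeq, hT, hNNe, Finset.image_empty]
    refine ⟨i₀, hi₀A, ?_⟩
    ext i j
    show g.Adj i j ↔ i ≠ j ∧ (i = i₀ ∨ j = i₀) ∧ i ∈ A ∧ j ∈ A
    constructor
    · intro h
      refine ⟨h.ne, ?_, (hin h).1, (hin h).2⟩
      by_contra hor
      push_neg at hor
      have : s(i, j) ∈ E' := by
        rw [hE', Finset.mem_filter, SimpleGraph.mem_edgeFinset, SimpleGraph.mem_edgeSet]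
        refine ⟨h, ?_⟩
        rw [Sym2.mem_iff]
        rintro (rfl | rfl)
        · exact hor.1 rfl
        · exact hor.2 rfl
      rw [hE'0] at this
      exact absurd this (Finset.notMem_empty _)
    · rintro ⟨hne, hor, hiA, hjA⟩
      rcases hor with rfl | rfl
      · have : j ∈ N := by
          rcases Finset.mem_insert.mp (hAsub hjA) with h | h
          · exact absurd h.symm hne
          · exact h
        exact (SimpleGraph.mem_neighborFinset g i j).mp this
      · have : i ∈ N := by
          rcases Finset.mem_insert.mp (hAsub hiA) with h | h
          · exact absurd h hne
          · exact h
        exact ((SimpleGraph.mem_neighborFinset g j i).mp this).symm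

end StarUnique

section StarValue
open SimpleGraph

def Mstar (A : Finset I) (fα c δ : ℝ) : ℝ :=
  ((A.card : ℝ) - 1) * (δ * (A.card : ℝ) * fα + 2 * ((1 - δ) * fα - c))

lemma payoff_eq' [Fintype I] (f : I → ℝ) (c δ : ℝ) (g : SimpleGraph I) (i : I)
    (S T : Finset I) (hS : ∀ j, j ∈ S ↔ (j ≠ i ∧ g.Reachable i j)) (hT : ∀ j, j ∈ T ↔ g.Adj i j) :
    payoff f c δ g i = (∑ j ∈ S, δ ^ (g.dist i j - 1) * f j) - (T.card : ℝ) * c := by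
  rw [payoff]
  have hS' : (univ.filter fun j => j ≠ i ∧ g.Reachable i j) = S := by
    ext j
    simp only [Finset.mem_filter, Finset.mem_univ, true_and]
    exact (hS j).symm
  have hT' : (univ.filter fun j => g.Adj i j) = T := by
    ext j
    simp only [Finset.mem_filter, Finset.mem_univ, true_and]
    exact (hT j).symm
  rw [hS', hT']

variable [Fintype I] [DecidableEq I]

lemma reach_mem_pair {g : SimpleGraph I} {A : Finset I}
    (hin : ∀ ⦃i j⦄, g.Adj i j → i ∈ A ∧ j ∈ A) {i j : I} (h : g.Reachable i j) :
    i = j ∨ (i ∈ A ∧ j ∈ A) := by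
  obtain ⟨w⟩ := h
  induction w with
  | nil => exact Or.inl rfl
  | @cons x z y h p ih =>
    refine Or.inr ⟨(hin h).1, ?_⟩
    rcases ih with rfl | hp
    · exact (hin h).2
    · exact hp.2

lemma starOn_adj {A : Finset I} {i₀ i j : I} :
    (starOn A i₀).Adj i j ↔ i ≠ j ∧ (i = i₀ ∨ j = i₀) ∧ i ∈ A ∧ j ∈ A := Iff.rfl

lemma starOn_reachable {A : Finset I} {i₀ : I} (hi₀ : i₀ ∈ A) {i j : I} :
    (starOn A i₀).Reachable i j ↔ i = j ∨ (i ∈ A ∧ j ∈ A) := by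
  constructor
  · exact fun h => reach_mem_pair (fun a b (hab : (starOn A i₀).Adj a b) => hab.2.2) h
  · rintro (rfl | ⟨hi, hj⟩)
    · exact Reachable.refl _
    · by_cases hij : i = j
      · exact hij ▸ Reachable.refl _
      · by_cases hii : i = i₀
        · subst hii
          exact (show (starOn A i).Adj i j from ⟨hij, Or.inl rfl, hi, hj⟩).reachable
        · by_cases hjj : j = i₀
          · subst hjj
            exact (show (starOn A j).Adj i j from ⟨hij, Or.inr rfl, hi, hj⟩).reachable
          · exact ((show (starOn A i₀).Adj i i₀ from ⟨hii, Or.inr rfl, hi, hi₀⟩).reachable).trans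
              (show (starOn A i₀).Adj i₀ j from ⟨fun h => hjj h.symm, Or.inl rfl, hi₀, hj⟩).reachable

lemma starOn_dist_one {A : Finset I} {i₀ i j : I} (hij : i ≠ j) (h : i = i₀ ∨ j = i₀)
    (hi : i ∈ A) (hj : j ∈ A) : (starOn A i₀).dist i j = 1 :=
  SimpleGraph.dist_eq_one_iff_adj.mpr ⟨hij, h, hi, hj⟩

lemma starOn_dist_two {A : Finset I} {i₀ i j : I} (hi₀ : i₀ ∈ A) (hi : i ∈ A) (hj : j ∈ A)
    (hii : i ≠ i₀) (hjj : j ≠ i₀) (hij : i ≠ j) : (starOn A i₀).dist i j = 2 := by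
  have hle : (starOn A i₀).dist i j ≤ 2 := by
    have := SimpleGraph.dist_le
      (SimpleGraph.Walk.cons (show (starOn A i₀).Adj i i₀ from ⟨hii, Or.inr rfl, hi, hi₀⟩)
        (SimpleGraph.Walk.cons (show (starOn A i₀).Adj i₀ j from
          ⟨fun h => hjj h.symm, Or.inl rfl, hi₀, hj⟩) SimpleGraph.Walk.nil))
    simpa using this
  have hr : (starOn A i₀).Reachable i j := (starOn_reachable hi₀).mpr (Or.inr ⟨hi, hj⟩)
  have h0 := hr.pos_dist_of_ne hij
  have h1 : (starOn A i₀).dist i j ≠ 1 := by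
    intro h
    have := SimpleGraph.dist_eq_one_iff_adj.mp h
    rcases this.2.1 with h' | h'
    · exact hii h'
    · exact hjj h'
  omega

variable {A : Finset I} {fα fβ c δ : ℝ}

lemma payoff_starOn_notA {i₀ : I} (hi₀ : i₀ ∈ A) {i : I} (hi : i ∉ A) :
    payoff (fTheta A fα fβ) c δ (starOn A i₀) i = 0 := by
  rw [payoff_eq' _ _ _ _ _ ∅ ∅ ?_ ?_]
  · simp
  · intro j
    simp only [Finset.notMem_empty, false_iff, not_and]
    intro hne hr
    rcases (starOn_reachable hi₀).mp hr with h | h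
    · exact hne h.symm
    · exact hi h.1
  · intro j
    simp only [Finset.notMem_empty, false_iff]
    intro hadj
    exact hi hadj.2.2.1

lemma payoff_starOn_center {i₀ : I} (hi₀ : i₀ ∈ A) (hA2 : 2 ≤ A.card) :
    payoff (fTheta A fα fβ) c δ (starOn A i₀) i₀
      = ((A.card : ℝ) - 1) * fα - ((A.card : ℝ) - 1) * c := by
  rw [payoff_eq' _ _ _ _ _ (A.erase i₀) (A.erase i₀) ?_ ?_]
  rotate_left
  · intro j
    simp only [Finset.mem_erase]
    constructor
    · rintro ⟨hne, hj⟩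
      exact ⟨hne, (starOn_reachable hi₀).mpr (Or.inr ⟨hi₀, hj⟩)⟩
    · rintro ⟨hne, hr⟩
      rcases (starOn_reachable hi₀).mp hr with h | h
      · exact absurd h.symm hne
      · exact ⟨hne, h.2⟩
  · intro j
    simp only [Finset.mem_erase]
    constructor
    · rintro ⟨hne, hj⟩
      exact ⟨fun hh => hne hh.symm, Or.inl rfl, hi₀, hj⟩
    · intro h
      exact ⟨fun hh => h.1 hh.symm, h.2.2.2⟩
  have hsum : ∑ j ∈ A.erase i₀, δ ^ ((starOn A i₀).dist i₀ j - 1) * fTheta A fα fβ j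
      = ∑ _j ∈ A.erase i₀, fα := by
    apply Finset.sum_congr rfl
    intro j hj
    rw [Finset.mem_erase] at hj
    rw [starOn_dist_one (fun h => hj.1 h.symm) (Or.inl rfl) hi₀ hj.2]
    rw [fTheta, if_pos hj.2]
    simp
  rw [hsum, Finset.sum_const, Finset.card_erase_of_mem hi₀, nsmul_eq_mul]
  have : ((A.card - 1 : ℕ) : ℝ) = (A.card : ℝ) - 1 := by
    have : 1 ≤ A.card := by omega
    push_cast [this]
    ring
  rw [this]

lemma payoff_starOn_leaf {i₀ : I} (hi₀ : i₀ ∈ A) (hA2 : 2 ≤ A.card) {i : I} (hi : i ∈ A)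
    (hne : i ≠ i₀) :
    payoff (fTheta A fα fβ) c δ (starOn A i₀) i
      = fα + ((A.card : ℝ) - 2) * (δ * fα) - c := by
  rw [payoff_eq' _ _ _ _ _ (A.erase i) ({i₀} : Finset I) ?_ ?_]
  rotate_left
  · intro j
    simp only [Finset.mem_erase]
    constructor
    · rintro ⟨hne', hj⟩
      exact ⟨hne', (starOn_reachable hi₀).mpr (Or.inr ⟨hi, hj⟩)⟩
    · rintro ⟨hne', hr⟩
      rcases (starOn_reachable hi₀).mp hr with h | h
      · exact absurd h.symm hne'
      · exact ⟨hne', h.2⟩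
  · intro j
    simp only [Finset.mem_singleton]
    constructor
    · rintro rfl
      exact ⟨hne, Or.inr rfl, hi, hi₀⟩
    · intro h
      rcases h.2.1 with h' | h'
      · exact absurd h' hne
      · exact h'
  have hmem : i₀ ∈ A.erase i := Finset.mem_erase.mpr ⟨fun h => hne h.symm, hi₀⟩
  rw [← Finset.insert_erase hmem]
  rw [Finset.sum_insert (Finset.notMem_erase _ _)]
  have hterm : δ ^ ((starOn A i₀).dist i i₀ - 1) * fTheta A fα fβ i₀ = fα := by
    rw [starOn_dist_one hne (Or.inr rfl) hi hi₀, fTheta, if_pos hi₀]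
    simp
  have hsum : ∑ j ∈ (A.erase i).erase i₀, δ ^ ((starOn A i₀).dist i j - 1) * fTheta A fα fβ j
      = ∑ _j ∈ (A.erase i).erase i₀, δ * fα := by
    apply Finset.sum_congr rfl
    intro j hj
    rw [Finset.mem_erase] at hj
    have hj2 := Finset.mem_erase.mp hj.2
    rw [starOn_dist_two hi₀ hi hj2.2 hne hj.1 (fun h => hj2.1 h.symm), fTheta, if_pos hj2.2]
    simp
  rw [hterm, hsum, Finset.sum_const, nsmul_eq_mul]
  have hc : (((A.erase i).erase i₀).card : ℝ) = (A.card : ℝ) - 2 := by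
    rw [Finset.card_erase_of_mem hmem, Finset.card_erase_of_mem hi]
    have : 2 ≤ A.card := hA2
    push_cast [show 1 ≤ A.card - 1 by omega, show 1 ≤ A.card by omega]
    ring
  rw [hc]
  simp

lemma totalPayoff_starOn {i₀ : I} (hi₀ : i₀ ∈ A) (hA2 : 2 ≤ A.card) :
    totalPayoff (fTheta A fα fβ) c δ (starOn A i₀) = Mstar A fα c δ := by
  rw [totalPayoff]
  rw [← Finset.sum_subset (Finset.subset_univ A) (fun x _ hx => payoff_starOn_notA hi₀ hx)]
  rw [← Finset.add_sum_erase A _ hi₀]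
  rw [payoff_starOn_center hi₀ hA2]
  have hsum : ∑ i ∈ A.erase i₀, payoff (fTheta A fα fβ) c δ (starOn A i₀) i
      = ∑ _i ∈ A.erase i₀, (fα + ((A.card : ℝ) - 2) * (δ * fα) - c) := by
    apply Finset.sum_congr rfl
    intro i hi
    rw [Finset.mem_erase] at hi
    exact payoff_starOn_leaf hi₀ hA2 hi.2 hi.1
  rw [hsum, Finset.sum_const, Finset.card_erase_of_mem hi₀, nsmul_eq_mul]
  have : ((A.card - 1 : ℕ) : ℝ) = (A.card : ℝ) - 1 := by
    push_cast [show 1 ≤ A.card by omega]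
    ring
  rw [this, Mstar]
  ring

end StarValue

section Chain
open SimpleGraph
variable [Fintype I] [DecidableEq I]

variable (g : SimpleGraph I) (A : Finset I) (fα fβ c δ : ℝ)

def sF (C : g.ConnectedComponent) : Finset I :=
  univ.filter (fun i => g.connectedComponentMk i = C)

def kC (C : g.ConnectedComponent) : ℕ := (sF g C).card

def aC (C : g.ConnectedComponent) : ℕ :=
  (A.filter (fun i => g.connectedComponentMk i = C)).card

def bC (C : g.ConnectedComponent) : ℕ :=
  (Aᶜ.filter (fun i => g.connectedComponentMk i = C)).card

def nIso : Finset I := univ.filter (fun j => j ∉ A ∧ 0 < g.degree j)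

def neC (C : g.ConnectedComponent) : ℕ :=
  ((nIso g A).filter (fun i => g.connectedComponentMk i = C)).card

def FC (C : g.ConnectedComponent) : ℝ := ∑ i ∈ sF g C, fTheta A fα fβ i

def HC (C : g.ConnectedComponent) : ℝ :=
  ((kC g C : ℝ) - 1) * (δ * FC g A fα fβ C + 2 * ((1 - δ) * fα - c))
    + (((1 - δ) * fβ - c) - ((1 - δ) * fα - c)) * (neC g A C : ℝ)

def GC (C : g.ConnectedComponent) : ℝ :=
  if 1 ≤ aC g A C then ((aC g A C : ℝ) - 1) * (δ * (aC g A C : ℝ) * fα + 2 * ((1 - δ) * fα - c))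
  else 0

variable {g A fα fβ c δ}

lemma mem_sF {C : g.ConnectedComponent} {i : I} :
    i ∈ sF g C ↔ g.connectedComponentMk i = C := by simp [sF]

lemma self_mem_sF (i : I) : i ∈ sF g (g.connectedComponentMk i) := mem_sF.mpr rfl

lemma kC_pos (C : g.ConnectedComponent) : 1 ≤ kC g C := by
  obtain ⟨v, hv⟩ := C.exists_rep
  exact Finset.card_pos.mpr ⟨v, mem_sF.mpr hv⟩

lemma kC_eq_aC_add_bC (C : g.ConnectedComponent) : kC g C = aC g A C + bC g A C := by
  rw [kC, aC, bC, sF]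
  rw [← Finset.card_union_of_disjoint]
  · congr 1
    rw [← Finset.filter_union, Finset.union_compl]
  · exact Finset.disjoint_filter_filter (disjoint_compl_right)

lemma aC_le (C : g.ConnectedComponent) : aC g A C ≤ A.card :=
  Finset.card_le_card (Finset.filter_subset _ _)

lemma bC_le (C : g.ConnectedComponent) : bC g A C ≤ Aᶜ.card :=
  Finset.card_le_card (Finset.filter_subset _ _)

lemma neC_le_bC (C : g.ConnectedComponent) : neC g A C ≤ bC g A C := by
  apply Finset.card_le_card
  apply Finset.filter_subset_filter
  intro j hj
  rw [nIso, Finset.mem_filter] at hj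
  exact Finset.mem_compl.mpr hj.2.1

lemma FC_eq (C : g.ConnectedComponent) :
    FC g A fα fβ C = (aC g A C : ℝ) * fα + (bC g A C : ℝ) * fβ := by
  rw [FC, aC, bC]
  have hsplit : sF g C = (A.filter (fun i => g.connectedComponentMk i = C))
      ∪ (Aᶜ.filter (fun i => g.connectedComponentMk i = C)) := by
    rw [← Finset.filter_union, Finset.union_compl, sF]
  rw [hsplit, Finset.sum_union (Finset.disjoint_filter_filter (disjoint_compl_right))]
  congr 1
  · rw [Finset.sum_congr rfl (fun i hi => ?_), Finset.sum_const, nsmul_eq_mul]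
    rw [fTheta, if_pos (Finset.mem_filter.mp hi).1]
  · rw [Finset.sum_congr rfl (fun i hi => ?_), Finset.sum_const, nsmul_eq_mul]
    rw [fTheta, if_neg (Finset.mem_compl.mp (Finset.mem_filter.mp hi).1)]

lemma card_eq_sum_kC : Fintype.card I = ∑ C : g.ConnectedComponent, kC g C := by
  rw [← Finset.card_univ]
  exact Finset.card_eq_sum_card_fiberwise (fun i _ => Finset.mem_univ _)

lemma cardA_eq_sum_aC : A.card = ∑ C : g.ConnectedComponent, aC g A C :=
  Finset.card_eq_sum_card_fiberwise (fun i _ => Finset.mem_univ _)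

lemma cardnIso_eq_sum_neC : (nIso g A).card = ∑ C : g.ConnectedComponent, neC g A C :=
  Finset.card_eq_sum_card_fiberwise (fun i _ => Finset.mem_univ _)

lemma sum_fiber_eq (t : I → ℝ) :
    ∑ i, t i = ∑ C : g.ConnectedComponent, ∑ i ∈ sF g C, t i := by
  rw [← Finset.sum_fiberwise univ (fun i => g.connectedComponentMk i) t]
  rfl

lemma Rsum_eq :
    ∑ i, ∑ j ∈ univ.filter (fun j => j ≠ i ∧ g.Reachable i j), fTheta A fα fβ j
      = ∑ C : g.ConnectedComponent, ((kC g C : ℝ) - 1) * FC g A fα fβ C := by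
  have hfilter : ∀ i : I, univ.filter (fun j => j ≠ i ∧ g.Reachable i j)
      = (sF g (g.connectedComponentMk i)).erase i := by
    intro i
    ext j
    simp only [Finset.mem_filter, Finset.mem_univ, true_and, Finset.mem_erase, mem_sF]
    constructor
    · rintro ⟨hne, hr⟩
      exact ⟨hne, (SimpleGraph.ConnectedComponent.sound hr.symm)⟩
    · rintro ⟨hne, hc⟩
      exact ⟨hne, (SimpleGraph.ConnectedComponent.exact hc).symm⟩
  have hstep : ∀ i : I, ∑ j ∈ univ.filter (fun j => j ≠ i ∧ g.Reachable i j), fTheta A fα fβ j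
      = FC g A fα fβ (g.connectedComponentMk i) - fTheta A fα fβ i := by
    intro i
    rw [hfilter i, FC]
    exact Finset.sum_erase_eq_sub (self_mem_sF i)
  calc ∑ i, ∑ j ∈ univ.filter (fun j => j ≠ i ∧ g.Reachable i j), fTheta A fα fβ j
      = ∑ i, (FC g A fα fβ (g.connectedComponentMk i) - fTheta A fα fβ i) :=
        Finset.sum_congr rfl (fun i _ => hstep i)
    _ = ∑ C : g.ConnectedComponent, ∑ i ∈ sF g C,
          (FC g A fα fβ (g.connectedComponentMk i) - fTheta A fα fβ i) :=
        sum_fiber_eq _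
    _ = ∑ C : g.ConnectedComponent, ((kC g C : ℝ) - 1) * FC g A fα fβ C := by
        apply Finset.sum_congr rfl
        intro C _
        have : ∀ i ∈ sF g C, FC g A fα fβ (g.connectedComponentMk i) - fTheta A fα fβ i
            = FC g A fα fβ C - fTheta A fα fβ i := by
          intro i hi
          rw [mem_sF.mp hi]
        rw [Finset.sum_congr rfl this, Finset.sum_sub_distrib, Finset.sum_const, nsmul_eq_mul]
        rw [← FC]
        rw [← kC]
        ring

end Chain

section Chain2
open SimpleGraph
variable [Fintype I] [DecidableEq I]
variable {g : SimpleGraph I} {A : Finset I} {fα fβ c δ : ℝ}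

lemma deg_pos_of_reach_ne {x y : I} (h : g.Reachable x y) (hne : x ≠ y) : 0 < g.degree x := by
  obtain ⟨w⟩ := h
  cases w with
  | nil => exact absurd rfl hne
  | cons h p =>
    rw [← SimpleGraph.card_neighborFinset_eq_degree, Finset.card_pos]
    exact ⟨_, (SimpleGraph.mem_neighborFinset _ _ _).mpr h⟩

lemma neC_eq_bC {C : g.ConnectedComponent} (h2 : 2 ≤ kC g C) : neC g A C = bC g A C := by
  apply le_antisymm (neC_le_bC C)
  apply Finset.card_le_card
  intro j hj
  rw [Finset.mem_filter, Finset.mem_compl] at hj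
  rw [Finset.mem_filter, nIso, Finset.mem_filter]
  refine ⟨⟨Finset.mem_univ _, hj.1, ?_⟩, hj.2⟩
  have hk : 1 < (sF g C).card := by rw [← kC]; omega
  obtain ⟨j', hj', hne⟩ := Finset.exists_mem_ne hk j
  have hr : g.Reachable j j' := by
    apply SimpleGraph.ConnectedComponent.exact
    rw [hj.2, mem_sF.mp hj']
  exact deg_pos_of_reach_ne hr (Ne.symm hne)

lemma neC_eq_zero {C : g.ConnectedComponent} (h1 : kC g C = 1) : neC g A C = 0 := by
  rw [neC, Finset.card_eq_zero]
  rw [Finset.filter_eq_empty_iff]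
  intro j hj hC
  rw [nIso, Finset.mem_filter] at hj
  obtain ⟨-, -, hdeg⟩ := hj
  rw [← SimpleGraph.card_neighborFinset_eq_degree, Finset.card_pos] at hdeg
  obtain ⟨w, hw⟩ := hdeg
  have hadj := (SimpleGraph.mem_neighborFinset _ _ _).mp hw
  have hwC : w ∈ sF g C := by
    rw [mem_sF, ← hC]
    exact SimpleGraph.ConnectedComponent.sound hadj.symm.reachable
  have hjC : j ∈ sF g C := mem_sF.mpr hC
  have : ({j, w} : Finset I) ⊆ sF g C := by
    intro x hx
    rcases Finset.mem_insert.mp hx with rfl | hx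
    · exact hjC
    · exact (Finset.mem_singleton.mp hx) ▸ hwC
  have hcard := Finset.card_le_card this
  rw [Finset.card_pair hadj.ne] at hcard
  rw [kC] at h1
  omega

lemma double_count (t : I → ℝ) :
    ∑ i, ∑ j ∈ g.neighborFinset i, t j = ∑ j, t j * (g.degree j : ℝ) := by
  have h1 : ∀ i : I, ∑ j ∈ g.neighborFinset i, t j = ∑ j, if g.Adj i j then t j else 0 := by
    intro i
    rw [SimpleGraph.neighborFinset_eq_filter, Finset.sum_filter]
  rw [Finset.sum_congr rfl (fun i _ => h1 i), Finset.sum_comm]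
  apply Finset.sum_congr rfl
  intro j _
  have h2 : ∀ i : I, (if g.Adj i j then t j else 0) = (if g.Adj j i then t j else 0) := by
    intro i
    rw [SimpleGraph.adj_comm]
  rw [Finset.sum_congr rfl (fun i _ => h2 i), ← Finset.sum_filter]
  rw [Finset.sum_const, ← SimpleGraph.neighborFinset_eq_filter,
    SimpleGraph.card_neighborFinset_eq_degree, nsmul_eq_mul, mul_comm]

end Chain2

section Chain3
open SimpleGraph
variable [Fintype I] [DecidableEq I]
variable {g : SimpleGraph I} {A : Finset I} {fα fβ c δ : ℝ}

def Sfil (g : SimpleGraph I) (i : I) : Finset I :=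
  univ.filter (fun j => j ≠ i ∧ g.Reachable i j)

lemma payoff_eq_S (f : I → ℝ) (i : I) :
    payoff f c δ g i = (∑ j ∈ Sfil g i, δ ^ (g.dist i j - 1) * f j) - (g.degree i : ℝ) * c := by
  rw [payoff_eq' f c δ g i (Sfil g i) (g.neighborFinset i)
    (fun j => by simp [Sfil]) (fun j => SimpleGraph.mem_neighborFinset g i j),
    SimpleGraph.card_neighborFinset_eq_degree]

lemma fTheta_pos (hfβ : 0 < fβ) (hfαβ : fβ < fα) (j : I) : 0 < fTheta A fα fβ j := by
  rw [fTheta]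
  split <;> linarith

lemma perpair_le (hfβ : 0 < fβ) (hfαβ : fβ < fα) (hδ0 : 0 < δ) (hδ1 : δ < 1)
    {i j : I} (hj : j ∈ Sfil g i) :
    δ ^ (g.dist i j - 1) * fTheta A fα fβ j
      ≤ δ * fTheta A fα fβ j + (if g.Adj i j then (1 - δ) * fTheta A fα fβ j else 0) := by
  rw [Sfil, Finset.mem_filter] at hj
  obtain ⟨-, hne, hr⟩ := hj
  by_cases hadj : g.Adj i j
  · rw [if_pos hadj, SimpleGraph.dist_eq_one_iff_adj.mpr hadj]
    simp only [Nat.sub_self, pow_zero, one_mul]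
    have := (fTheta_pos hfβ hfαβ j (A := A)).le
    nlinarith
  · rw [if_neg hadj, add_zero]
    have h0 := hr.pos_dist_of_ne (Ne.symm hne)
    have h1 : g.dist i j ≠ 1 := fun h => hadj (SimpleGraph.dist_eq_one_iff_adj.mp h)
    have h2 : 1 ≤ g.dist i j - 1 := by omega
    have hpow : δ ^ (g.dist i j - 1) ≤ δ ^ 1 :=
      pow_le_pow_of_le_one hδ0.le hδ1.le h2
    rw [pow_one] at hpow
    exact mul_le_mul_of_nonneg_right hpow (fTheta_pos hfβ hfαβ j).le

lemma perpair_lt (hfβ : 0 < fβ) (hfαβ : fβ < fα) (hδ0 : 0 < δ) (hδ1 : δ < 1)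
    {i j : I} (hj : j ∈ Sfil g i) (hd : 3 ≤ g.dist i j) :
    δ ^ (g.dist i j - 1) * fTheta A fα fβ j
      < δ * fTheta A fα fβ j + (if g.Adj i j then (1 - δ) * fTheta A fα fβ j else 0) := by
  have hadj : ¬ g.Adj i j := by
    intro h
    rw [← SimpleGraph.dist_eq_one_iff_adj] at h
    omega
  rw [if_neg hadj, add_zero]
  have h2 : 2 ≤ g.dist i j - 1 := by omega
  have hpow : δ ^ (g.dist i j - 1) ≤ δ ^ 2 := pow_le_pow_of_le_one hδ0.le hδ1.le h2
  have hsq : δ ^ 2 < δ := by nlinarith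
  have := fTheta_pos hfβ hfαβ j (A := A)
  calc δ ^ (g.dist i j - 1) * fTheta A fα fβ j ≤ δ ^ 2 * fTheta A fα fβ j :=
        mul_le_mul_of_nonneg_right hpow this.le
    _ < δ * fTheta A fα fβ j := by nlinarith

lemma inner_bound (hfβ : 0 < fβ) (hfαβ : fβ < fα) (hδ0 : 0 < δ) (hδ1 : δ < 1) (i : I) :
    ∑ j ∈ Sfil g i, δ ^ (g.dist i j - 1) * fTheta A fα fβ j
      ≤ δ * (∑ j ∈ Sfil g i, fTheta A fα fβ j)
        + ∑ j ∈ g.neighborFinset i, (1 - δ) * fTheta A fα fβ j := by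
  have hstep : ∑ j ∈ Sfil g i, δ ^ (g.dist i j - 1) * fTheta A fα fβ j
      ≤ ∑ j ∈ Sfil g i, (δ * fTheta A fα fβ j + (if g.Adj i j then (1 - δ) * fTheta A fα fβ j else 0)) :=
    Finset.sum_le_sum (fun j hj => perpair_le hfβ hfαβ hδ0 hδ1 hj)
  refine hstep.trans (le_of_eq ?_)
  rw [Finset.sum_add_distrib, Finset.mul_sum]
  congr 1
  rw [← Finset.sum_filter]
  congr 1
  ext j
  simp only [Finset.mem_filter, Sfil, Finset.mem_univ, true_and,
    SimpleGraph.mem_neighborFinset]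
  constructor
  · rintro ⟨-, h⟩
    exact h
  · intro h
    exact ⟨⟨h.ne', h.reachable⟩, h⟩

lemma inner_bound_strict (hfβ : 0 < fβ) (hfαβ : fβ < fα) (hδ0 : 0 < δ) (hδ1 : δ < 1)
    {i j0 : I} (hj0 : j0 ∈ Sfil g i) (hd : 3 ≤ g.dist i j0) :
    ∑ j ∈ Sfil g i, δ ^ (g.dist i j - 1) * fTheta A fα fβ j
      < δ * (∑ j ∈ Sfil g i, fTheta A fα fβ j)
        + ∑ j ∈ g.neighborFinset i, (1 - δ) * fTheta A fα fβ j := by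
  have hstep : ∑ j ∈ Sfil g i, δ ^ (g.dist i j - 1) * fTheta A fα fβ j
      < ∑ j ∈ Sfil g i, (δ * fTheta A fα fβ j + (if g.Adj i j then (1 - δ) * fTheta A fα fβ j else 0)) :=
    Finset.sum_lt_sum (fun j hj => perpair_le hfβ hfαβ hδ0 hδ1 hj)
      ⟨j0, hj0, perpair_lt hfβ hfαβ hδ0 hδ1 hj0 hd⟩
  refine hstep.trans_le (le_of_eq ?_)
  rw [Finset.sum_add_distrib, Finset.mul_sum]
  congr 1
  rw [← Finset.sum_filter]
  congr 1
  ext j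
  simp only [Finset.mem_filter, Sfil, Finset.mem_univ, true_and,
    SimpleGraph.mem_neighborFinset]
  constructor
  · rintro ⟨-, h⟩
    exact h
  · intro h
    exact ⟨⟨h.ne', h.reachable⟩, h⟩

lemma slack_rewrite :
    (∑ i, ∑ j ∈ g.neighborFinset i, (1 - δ) * fTheta A fα fβ j) - ∑ i, (g.degree i : ℝ) * c
      = ∑ j, ((1 - δ) * fTheta A fα fβ j - c) * (g.degree j : ℝ) := by
  rw [double_count (fun j => (1 - δ) * fTheta A fα fβ j), ← Finset.sum_sub_distrib]
  apply Finset.sum_congr rfl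
  intro j _
  ring

lemma partA1 (hfβ : 0 < fβ) (hfαβ : fβ < fα) (hδ0 : 0 < δ) (hδ1 : δ < 1) :
    totalPayoff (fTheta A fα fβ) c δ g
      ≤ δ * (∑ i, ∑ j ∈ Sfil g i, fTheta A fα fβ j)
        + ∑ j, ((1 - δ) * fTheta A fα fβ j - c) * (g.degree j : ℝ) := by
  rw [totalPayoff, Finset.sum_congr rfl
    (fun i _ => payoff_eq_S (g := g) (c := c) (δ := δ) (fTheta A fα fβ) i),
    Finset.sum_sub_distrib]
  have h1 : ∑ i, ∑ j ∈ Sfil g i, δ ^ (g.dist i j - 1) * fTheta A fα fβ j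
      ≤ ∑ i, (δ * (∑ j ∈ Sfil g i, fTheta A fα fβ j)
        + ∑ j ∈ g.neighborFinset i, (1 - δ) * fTheta A fα fβ j) :=
    Finset.sum_le_sum (fun i _ => inner_bound hfβ hfαβ hδ0 hδ1 i)
  rw [Finset.sum_add_distrib, ← Finset.mul_sum] at h1
  have h2 := slack_rewrite (g := g) (A := A) (fα := fα) (fβ := fβ) (c := c) (δ := δ)
  linarith

lemma partA1_strict (hfβ : 0 < fβ) (hfαβ : fβ < fα) (hδ0 : 0 < δ) (hδ1 : δ < 1)
    (hW : ∃ i0 j0, j0 ≠ i0 ∧ g.Reachable i0 j0 ∧ 3 ≤ g.dist i0 j0) :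
    totalPayoff (fTheta A fα fβ) c δ g
      < δ * (∑ i, ∑ j ∈ Sfil g i, fTheta A fα fβ j)
        + ∑ j, ((1 - δ) * fTheta A fα fβ j - c) * (g.degree j : ℝ) := by
  obtain ⟨i0, j0, hne, hr, hd⟩ := hW
  have hj0 : j0 ∈ Sfil g i0 := by
    rw [Sfil, Finset.mem_filter]
    exact ⟨Finset.mem_univ _, hne, hr⟩
  rw [totalPayoff, Finset.sum_congr rfl
    (fun i _ => payoff_eq_S (g := g) (c := c) (δ := δ) (fTheta A fα fβ) i),
    Finset.sum_sub_distrib]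
  have h1 : ∑ i, ∑ j ∈ Sfil g i, δ ^ (g.dist i j - 1) * fTheta A fα fβ j
      < ∑ i, (δ * (∑ j ∈ Sfil g i, fTheta A fα fβ j)
        + ∑ j ∈ g.neighborFinset i, (1 - δ) * fTheta A fα fβ j) :=
    Finset.sum_lt_sum (fun i _ => inner_bound hfβ hfαβ hδ0 hδ1 i)
      ⟨i0, Finset.mem_univ _, inner_bound_strict hfβ hfαβ hδ0 hδ1 hj0 hd⟩
  rw [Finset.sum_add_distrib, ← Finset.mul_sum] at h1
  have h2 := slack_rewrite (g := g) (A := A) (fα := fα) (fβ := fβ) (c := c) (δ := δ)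
  linarith

end Chain3

section Chain4
open SimpleGraph
variable [Fintype I] [DecidableEq I]
variable {g : SimpleGraph I} {A : Finset I} {fα fβ c δ : ℝ}

lemma EB_ge_nIso : (nIso g A).card ≤ ∑ j ∈ Aᶜ, g.degree j := by
  calc (nIso g A).card = ∑ _j ∈ nIso g A, 1 := by simp
    _ ≤ ∑ j ∈ nIso g A, g.degree j := by
        apply Finset.sum_le_sum
        intro j hj
        rw [nIso, Finset.mem_filter] at hj
        omega
    _ ≤ ∑ j ∈ Aᶜ, g.degree j := by
        apply Finset.sum_le_sum_of_subset
        intro j hj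
        rw [nIso, Finset.mem_filter] at hj
        exact Finset.mem_compl.mpr hj.2.1

lemma deg_split : (∑ j ∈ A, g.degree j) + (∑ j ∈ Aᶜ, g.degree j) = 2 * g.edgeFinset.card := by
  rw [Finset.sum_add_sum_compl, SimpleGraph.sum_degrees_eq_twice_card_edges]

lemma slack_split :
    ∑ j, ((1 - δ) * fTheta A fα fβ j - c) * (g.degree j : ℝ)
      = ((1 - δ) * fα - c) * ((∑ j ∈ A, g.degree j : ℕ) : ℝ)
        + ((1 - δ) * fβ - c) * ((∑ j ∈ Aᶜ, g.degree j : ℕ) : ℝ) := by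
  rw [← Finset.sum_add_sum_compl A]
  congr 1
  · rw [Nat.cast_sum, Finset.mul_sum]
    apply Finset.sum_congr rfl
    intro j hj
    rw [fTheta, if_pos hj]
  · rw [Nat.cast_sum, Finset.mul_sum]
    apply Finset.sum_congr rfl
    intro j hj
    rw [fTheta, if_neg (Finset.mem_compl.mp hj)]

lemma partA2 (hfαβ : fβ < fα) (hδ1 : δ < 1) (h1 : (1 - δ) * fα < c) :
    ∑ j, ((1 - δ) * fTheta A fα fβ j - c) * (g.degree j : ℝ)
      ≤ ((1 - δ) * fα - c) * (2 * ((Fintype.card I : ℝ) - (Fintype.card g.ConnectedComponent : ℝ))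
          - ((nIso g A).card : ℝ))
        + ((1 - δ) * fβ - c) * ((nIso g A).card : ℝ) := by
  rw [slack_split]
  set x := ((∑ j ∈ A, g.degree j : ℕ) : ℝ) with hx
  set y := ((∑ j ∈ Aᶜ, g.degree j : ℕ) : ℝ) with hy
  set b := ((nIso g A).card : ℝ) with hb
  set n := (Fintype.card I : ℝ) with hn
  set r := (Fintype.card g.ConnectedComponent : ℝ) with hr
  have hxy : 2 * (n - r) ≤ x + y := by
    have hnat := card_le_edge_cc g.edgeFinset.card g rfl
    have hds := deg_split (g := g) (A := A)
    have hcast : ((∑ j ∈ A, g.degree j : ℕ) : ℝ) + ((∑ j ∈ Aᶜ, g.degree j : ℕ) : ℝ)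
        = 2 * ((g.edgeFinset.card : ℕ) : ℝ) := by exact_mod_cast congrArg (fun t : ℕ => (t : ℝ)) hds
    have hnr : (Fintype.card I : ℝ) ≤ (g.edgeFinset.card : ℝ) + (Fintype.card g.ConnectedComponent : ℝ) := by
      exact_mod_cast hnat
    rw [hx, hy, hn, hr]
    linarith
  have hyb : b ≤ y := by
    rw [hy, hb]
    exact_mod_cast EB_ge_nIso
  have hσA : (1 - δ) * fα - c < 0 := by linarith
  have hσBA : ((1 - δ) * fβ - c) - ((1 - δ) * fα - c) ≤ 0 := by nlinarith
  have t1 : ((1 - δ) * fα - c) * ((x + y) - 2 * (n - r)) ≤ 0 :=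
    mul_nonpos_of_nonpos_of_nonneg hσA.le (by linarith)
  have t2 : (((1 - δ) * fβ - c) - ((1 - δ) * fα - c)) * (y - b) ≤ 0 :=
    mul_nonpos_of_nonpos_of_nonneg hσBA (by linarith)
  nlinarith [t1, t2]

lemma partA2_strict (hfαβ : fβ < fα) (hδ1 : δ < 1) (h1 : (1 - δ) * fα < c)
    (hstrict : Fintype.card I + 1 ≤ g.edgeFinset.card + Fintype.card g.ConnectedComponent) :
    ∑ j, ((1 - δ) * fTheta A fα fβ j - c) * (g.degree j : ℝ)
      < ((1 - δ) * fα - c) * (2 * ((Fintype.card I : ℝ) - (Fintype.card g.ConnectedComponent : ℝ))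
          - ((nIso g A).card : ℝ))
        + ((1 - δ) * fβ - c) * ((nIso g A).card : ℝ) := by
  rw [slack_split]
  set x := ((∑ j ∈ A, g.degree j : ℕ) : ℝ) with hx
  set y := ((∑ j ∈ Aᶜ, g.degree j : ℕ) : ℝ) with hy
  set b := ((nIso g A).card : ℝ) with hb
  set n := (Fintype.card I : ℝ) with hn
  set r := (Fintype.card g.ConnectedComponent : ℝ) with hr
  have hxy : 2 * (n - r) + 2 ≤ x + y := by
    have hds := deg_split (g := g) (A := A)
    have hcast : ((∑ j ∈ A, g.degree j : ℕ) : ℝ) + ((∑ j ∈ Aᶜ, g.degree j : ℕ) : ℝ)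
        = 2 * ((g.edgeFinset.card : ℕ) : ℝ) := by exact_mod_cast congrArg (fun t : ℕ => (t : ℝ)) hds
    have hnr : (Fintype.card I : ℝ) + 1 ≤ (g.edgeFinset.card : ℝ) + (Fintype.card g.ConnectedComponent : ℝ) := by
      exact_mod_cast hstrict
    rw [hx, hy, hn, hr]
    linarith
  have hyb : b ≤ y := by
    rw [hy, hb]
    exact_mod_cast EB_ge_nIso
  have hσA : (1 - δ) * fα - c < 0 := by linarith
  have hσBA : ((1 - δ) * fβ - c) - ((1 - δ) * fα - c) ≤ 0 := by nlinarith
  have t1 : ((1 - δ) * fα - c) * ((x + y) - 2 * (n - r)) ≤ ((1 - δ) * fα - c) * 2 := by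
    apply mul_le_mul_of_nonpos_left _ hσA.le
    linarith
  have t2 : (((1 - δ) * fβ - c) - ((1 - δ) * fα - c)) * (y - b) ≤ 0 :=
    mul_nonpos_of_nonpos_of_nonneg hσBA (by linarith)
  nlinarith [t1, t2]

lemma regroup :
    δ * (∑ i, ∑ j ∈ Sfil g i, fTheta A fα fβ j)
      + ((1 - δ) * fα - c) * (2 * ((Fintype.card I : ℝ) - (Fintype.card g.ConnectedComponent : ℝ))
          - ((nIso g A).card : ℝ))
      + ((1 - δ) * fβ - c) * ((nIso g A).card : ℝ)
      = ∑ C : g.ConnectedComponent, HC g A fα fβ c δ C := by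
  have hR : ∑ i, ∑ j ∈ Sfil g i, fTheta A fα fβ j
      = ∑ C : g.ConnectedComponent, ((kC g C : ℝ) - 1) * FC g A fα fβ C := by
    rw [← Rsum_eq]
    apply Finset.sum_congr rfl
    intro i _
    rfl
  have hk : ∑ C : g.ConnectedComponent, ((kC g C : ℝ) - 1)
      = (Fintype.card I : ℝ) - (Fintype.card g.ConnectedComponent : ℝ) := by
    rw [Finset.sum_sub_distrib, Finset.sum_const, Finset.card_univ, nsmul_eq_mul, mul_one]
    congr 1
    rw [card_eq_sum_kC (g := g)]
    push_cast
    rfl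
  have hne : ∑ C : g.ConnectedComponent, (neC g A C : ℝ) = ((nIso g A).card : ℝ) := by
    rw [cardnIso_eq_sum_neC (g := g) (A := A)]
    push_cast
    rfl
  have hHC : ∀ C : g.ConnectedComponent, HC g A fα fβ c δ C
      = δ * (((kC g C : ℝ) - 1) * FC g A fα fβ C)
        + 2 * ((1 - δ) * fα - c) * ((kC g C : ℝ) - 1)
        + (((1 - δ) * fβ - c) - ((1 - δ) * fα - c)) * (neC g A C : ℝ) := by
    intro C
    rw [HC]
    ring
  rw [Finset.sum_congr rfl (fun C _ => hHC C), Finset.sum_add_distrib, Finset.sum_add_distrib,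
    ← Finset.mul_sum, ← Finset.mul_sum, ← Finset.mul_sum, hR, hk, hne]
  ring

lemma partA (hfβ : 0 < fβ) (hfαβ : fβ < fα) (hδ0 : 0 < δ) (hδ1 : δ < 1)
    (h1 : (1 - δ) * fα < c) :
    totalPayoff (fTheta A fα fβ) c δ g ≤ ∑ C : g.ConnectedComponent, HC g A fα fβ c δ C := by
  have ha1 := partA1 (g := g) (A := A) (c := c) hfβ hfαβ hδ0 hδ1
  have ha2 := partA2 (g := g) (A := A) (c := c) hfαβ hδ1 h1
  have hre := regroup (g := g) (A := A) (fα := fα) (fβ := fβ) (c := c) (δ := δ)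
  linarith

lemma partA_strict1 (hfβ : 0 < fβ) (hfαβ : fβ < fα) (hδ0 : 0 < δ) (hδ1 : δ < 1)
    (h1 : (1 - δ) * fα < c)
    (hW : ∃ i0 j0, j0 ≠ i0 ∧ g.Reachable i0 j0 ∧ 3 ≤ g.dist i0 j0) :
    totalPayoff (fTheta A fα fβ) c δ g < ∑ C : g.ConnectedComponent, HC g A fα fβ c δ C := by
  have ha1 := partA1_strict (g := g) (A := A) (c := c) hfβ hfαβ hδ0 hδ1 hW
  have ha2 := partA2 (g := g) (A := A) (c := c) hfαβ hδ1 h1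
  have hre := regroup (g := g) (A := A) (fα := fα) (fβ := fβ) (c := c) (δ := δ)
  linarith

lemma partA_strict2 (hfβ : 0 < fβ) (hfαβ : fβ < fα) (hδ0 : 0 < δ) (hδ1 : δ < 1)
    (h1 : (1 - δ) * fα < c)
    (hstrict : Fintype.card I + 1 ≤ g.edgeFinset.card + Fintype.card g.ConnectedComponent) :
    totalPayoff (fTheta A fα fβ) c δ g < ∑ C : g.ConnectedComponent, HC g A fα fβ c δ C := by
  have ha1 := partA1 (g := g) (A := A) (c := c) hfβ hfαβ hδ0 hδ1
  have ha2 := partA2_strict (g := g) (A := A) (c := c) hfαβ hδ1 h1 hstrict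
  have hre := regroup (g := g) (A := A) (fα := fα) (fβ := fβ) (c := c) (δ := δ)
  linarith

end Chain4

section Arith
variable {nα nβ fα fβ c δ : ℝ}

lemma R1core (hfβ : 0 < fβ) (hfαβ : fβ < fα) (hδ0 : 0 < δ)
    (h2 : (1 + δ * (nα - 1)) * fα + (1 + δ * (nα + nβ - 2)) * fβ < 2 * c)
    {x y : ℝ} (hx1 : 1 ≤ x) (hy1 : 1 ≤ y) (hxn : x ≤ nα) (hxyn : x + y ≤ nα + nβ) :
    ((x + y) - 1) * (δ * (x * fα + y * fβ) + 2 * ((1 - δ) * fα - c))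
        + (((1 - δ) * fβ - c) - ((1 - δ) * fα - c)) * y
      < (x - 1) * (δ * x * fα + 2 * ((1 - δ) * fα - c)) := by
  have hfα : 0 < fα := lt_trans hfβ hfαβ
  have hkey : fα + fβ + δ * (x - 1) * fα + δ * (x + y - 2) * fβ - 2 * c < 0 := by
    nlinarith [mul_nonneg (mul_nonneg hδ0.le hfα.le) (sub_nonneg.mpr hxn),
      mul_nonneg (mul_nonneg hδ0.le hfβ.le) (sub_nonneg.mpr hxyn)]
  have hy0 : (0 : ℝ) < y := by linarith
  have hprod := mul_neg_of_pos_of_neg hy0 hkey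
  nlinarith [hprod]

lemma R2core (hfβ : 0 < fβ) (hfαβ : fβ < fα) (hδ0 : 0 < δ) (hδ1 : δ < 1)
    (h2 : (1 + δ * (nα - 1)) * fα + (1 + δ * (nα + nβ - 2)) * fβ < 2 * c)
    (hnα2 : 2 ≤ nα)
    {y : ℝ} (hy2 : 2 ≤ y) (hyn : y ≤ nβ) :
    (y - 1) * (δ * y * fβ + 2 * ((1 - δ) * fα - c))
        + (((1 - δ) * fβ - c) - ((1 - δ) * fα - c)) * y < 0 := by
  have hfα : 0 < fα := lt_trans hfβ hfαβ
  have ht := R1core hfβ hfαβ hδ0 h2 (x := 1) (y := y - 1) le_rfl (by linarith) (by linarith)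
    (by linarith)
  have hmono : (y - 1) * (δ * y * fβ + 2 * ((1 - δ) * fα - c))
        + (((1 - δ) * fβ - c) - ((1 - δ) * fα - c)) * y
      ≤ ((1 + (y - 1)) - 1) * (δ * (1 * fα + (y - 1) * fβ) + 2 * ((1 - δ) * fα - c))
        + (((1 - δ) * fβ - c) - ((1 - δ) * fα - c)) * (y - 1) := by
    nlinarith [mul_nonneg (mul_nonneg (show (0:ℝ) ≤ y - 1 by linarith) hδ0.le)
      (show (0:ℝ) ≤ fα - fβ by linarith)]
  have hz : ((1 : ℝ) - 1) * (δ * 1 * fα + 2 * ((1 - δ) * fα - c)) = 0 := by ring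
  linarith

lemma partB2_gen {ι : Type*} (s : Finset ι) (a : ι → ℕ) (ha1 : ∀ C ∈ s, 1 ≤ a C)
    (hsum : ∑ C ∈ s, (a C : ℝ) = nα) (hs1 : 1 ≤ s.card)
    (hfα : 0 < fα) (hδ0 : 0 < δ) :
    ∑ C ∈ s, ((a C : ℝ) - 1) * (δ * (a C : ℝ) * fα + 2 * ((1 - δ) * fα - c))
        + ((s.card : ℝ) - 1) * (δ * nα * fα + 2 * ((1 - δ) * fα - c))
      ≤ (nα - 1) * (δ * nα * fα + 2 * ((1 - δ) * fα - c)) := by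
  classical
  set σ := 2 * ((1 - δ) * fα - c) with hσ
  set R := (s.card : ℝ) with hR
  have hterm : ∀ C ∈ s, R - 1 ≤ nα - (a C : ℝ) := by
    intro C hC
    have h1 : (s.erase C).card • 1 ≤ ∑ D ∈ s.erase C, a D :=
      Finset.card_nsmul_le_sum _ _ _ (fun D hD => ha1 D (Finset.mem_of_mem_erase hD))
    have h2 : ∑ D ∈ s.erase C, (a D : ℝ) = nα - (a C : ℝ) := by
      rw [← hsum]
      exact Finset.sum_erase_eq_sub hC
    have h3 : ((s.erase C).card : ℝ) ≤ ∑ D ∈ s.erase C, (a D : ℝ) := by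
      rw [smul_eq_mul, mul_one] at h1
      push_cast
      exact_mod_cast h1
    rw [Finset.card_erase_of_mem hC] at h3
    have h4 : ((s.card - 1 : ℕ) : ℝ) = R - 1 := by
      rw [hR]
      push_cast [hs1]
      ring
    rw [h4] at h3
    linarith
  have e1 : (R - 1) * nα ≤ ∑ C ∈ s, (a C : ℝ) * (nα - (a C : ℝ)) := by
    calc (R - 1) * nα = ∑ C ∈ s, (a C : ℝ) * (R - 1) := by
          rw [← Finset.sum_mul, hsum]
          ring
      _ ≤ ∑ C ∈ s, (a C : ℝ) * (nα - (a C : ℝ)) :=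
          Finset.sum_le_sum (fun C hC =>
            mul_le_mul_of_nonneg_left (hterm C hC) (Nat.cast_nonneg _))
  have hG : ∑ C ∈ s, ((a C : ℝ) - 1) * (δ * (a C : ℝ) * fα + σ)
      = (σ - δ * fα + δ * fα * nα) * nα - σ * R
        - δ * fα * (∑ C ∈ s, (a C : ℝ) * (nα - (a C : ℝ))) := by
    have hterm2 : ∀ C ∈ s, ((a C : ℝ) - 1) * (δ * (a C : ℝ) * fα + σ)
        = ((σ - δ * fα + δ * fα * nα) * (a C : ℝ) - σ)
          - δ * fα * ((a C : ℝ) * (nα - (a C : ℝ))) := by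
      intro C _
      ring
    rw [Finset.sum_congr rfl hterm2, Finset.sum_sub_distrib, Finset.sum_sub_distrib,
      ← Finset.mul_sum, hsum, Finset.sum_const, nsmul_eq_mul, ← Finset.mul_sum, ← hR]
    ring
  rw [hG]
  have e1' : δ * fα * ((R - 1) * nα) ≤ δ * fα * (∑ C ∈ s, (a C : ℝ) * (nα - (a C : ℝ))) :=
    mul_le_mul_of_nonneg_left e1 (by positivity)
  nlinarith [e1']

end Arith

section PartB
open SimpleGraph
variable [Fintype I] [DecidableEq I]
variable {g : SimpleGraph I} {A : Finset I} {fα fβ c δ : ℝ}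

lemma HC_le_GC (hfβ : 0 < fβ) (hfαβ : fβ < fα) (hδ0 : 0 < δ) (hδ1 : δ < 1)
    (hA2 : 2 ≤ A.card)
    (h2 : (1 + δ * ((A.card : ℝ) - 1)) * fα
      + (1 + δ * ((A.card : ℝ) + (Aᶜ.card : ℝ) - 2)) * fβ < 2 * c)
    (C : g.ConnectedComponent) :
    HC g A fα fβ c δ C ≤ GC g A fα c δ C := by
  have hk1 := kC_pos (g := g) C
  have hkab := kC_eq_aC_add_bC (g := g) (A := A) C
  have hale := aC_le (g := g) (A := A) C
  have hble := bC_le (g := g) (A := A) C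
  rcases Nat.lt_or_ge (kC g C) 2 with hk | hk
  · have hkeq : kC g C = 1 := by omega
    have hne0 := neC_eq_zero (A := A) hkeq
    have hHC0 : HC g A fα fβ c δ C = 0 := by
      rw [HC, hne0, hkeq]
      push_cast
      ring
    rw [hHC0, GC]
    split_ifs with ha
    · have haeq : aC g A C = 1 := by omega
      rw [haeq]
      push_cast
      norm_num
    · exact le_refl _
  · have hneb := neC_eq_bC (A := A) hk
    by_cases hb : bC g A C = 0
    · have ha1 : 1 ≤ aC g A C := by omega
      apply le_of_eq
      rw [GC, if_pos ha1, HC, hneb, FC_eq, hkab, hb]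
      push_cast
      ring
    · by_cases ha : 1 ≤ aC g A C
      · rw [GC, if_pos ha, HC, hneb, FC_eq, hkab]
        push_cast
        exact le_of_lt (R1core hfβ hfαβ hδ0 h2
          (by exact_mod_cast ha) (by exact_mod_cast Nat.one_le_iff_ne_zero.mpr hb)
          (by exact_mod_cast hale)
          (by push_cast; exact_mod_cast add_le_add hale hble))
      · have ha0 : aC g A C = 0 := by omega
        have hb2 : 2 ≤ bC g A C := by omega
        rw [GC, if_neg ha, HC, hneb, FC_eq, hkab, ha0]
        have hR2 := R2core (nα := (A.card : ℝ)) (nβ := (Aᶜ.card : ℝ)) hfβ hfαβ hδ0 hδ1 h2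
          (by exact_mod_cast hA2) (y := (bC g A C : ℝ))
          (by exact_mod_cast hb2) (by exact_mod_cast hble)
        push_cast
        nlinarith [hR2]

lemma HC_lt_GC (hfβ : 0 < fβ) (hfαβ : fβ < fα) (hδ0 : 0 < δ) (hδ1 : δ < 1)
    (hA2 : 2 ≤ A.card)
    (h2 : (1 + δ * ((A.card : ℝ) - 1)) * fα
      + (1 + δ * ((A.card : ℝ) + (Aᶜ.card : ℝ) - 2)) * fβ < 2 * c)
    (C : g.ConnectedComponent) (hne1 : 1 ≤ neC g A C) :
    HC g A fα fβ c δ C < GC g A fα c δ C := by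
  have hk1 := kC_pos (g := g) C
  have hkab := kC_eq_aC_add_bC (g := g) (A := A) C
  have hale := aC_le (g := g) (A := A) C
  have hble := bC_le (g := g) (A := A) C
  have hk : 2 ≤ kC g C := by
    rcases Nat.lt_or_ge (kC g C) 2 with hk | hk
    · have hkeq : kC g C = 1 := by omega
      have := neC_eq_zero (A := A) hkeq
      omega
    · exact hk
  have hneb := neC_eq_bC (A := A) hk
  have hb : 1 ≤ bC g A C := by
    have := neC_le_bC (g := g) (A := A) C
    omega
  by_cases ha : 1 ≤ aC g A C
  · rw [GC, if_pos ha, HC, hneb, FC_eq, hkab]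
    push_cast
    exact R1core hfβ hfαβ hδ0 h2
      (by exact_mod_cast ha) (by exact_mod_cast hb)
      (by exact_mod_cast hale)
      (by push_cast; exact_mod_cast add_le_add hale hble)
  · have ha0 : aC g A C = 0 := by omega
    have hb2 : 2 ≤ bC g A C := by omega
    rw [GC, if_neg ha, HC, hneb, FC_eq, hkab, ha0]
    have hR2 := R2core (nα := (A.card : ℝ)) (nβ := (Aᶜ.card : ℝ)) hfβ hfαβ hδ0 hδ1 h2
      (by exact_mod_cast hA2) (y := (bC g A C : ℝ))
      (by exact_mod_cast hb2) (by exact_mod_cast hble)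
    push_cast
    nlinarith [hR2]

lemma GC_sum_eq :
    ∑ C : g.ConnectedComponent, GC g A fα c δ C
      = ∑ C ∈ univ.filter (fun C => 1 ≤ aC g A C),
          ((aC g A C : ℝ) - 1) * (δ * (aC g A C : ℝ) * fα + 2 * ((1 - δ) * fα - c)) := by
  rw [Finset.sum_filter]
  apply Finset.sum_congr rfl
  intro C _
  rw [GC]

lemma aC_sum_filter :
    ∑ C ∈ univ.filter (fun C => 1 ≤ aC g A C), ((aC g A C : ℝ)) = (A.card : ℝ) := by
  have h1 : ∑ C ∈ univ.filter (fun C => 1 ≤ aC g A C), aC g A C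
      = ∑ C : g.ConnectedComponent, aC g A C := by
    apply Finset.sum_subset (Finset.filter_subset _ _)
    intro C _ hC
    rw [Finset.mem_filter] at hC
    push_neg at hC
    have := hC (Finset.mem_univ _)
    omega
  rw [← Nat.cast_sum, h1, ← cardA_eq_sum_aC]

lemma filter_aC_nonempty (hA1 : 1 ≤ A.card) :
    1 ≤ (univ.filter (fun C : g.ConnectedComponent => 1 ≤ aC g A C)).card := by
  obtain ⟨a₀, ha₀⟩ := Finset.card_pos.mp (show 0 < A.card by omega)
  apply Finset.card_pos.mpr
  refine ⟨g.connectedComponentMk a₀, ?_⟩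
  rw [Finset.mem_filter]
  refine ⟨Finset.mem_univ _, ?_⟩
  apply Finset.card_pos.mpr
  exact ⟨a₀, Finset.mem_filter.mpr ⟨ha₀, rfl⟩⟩

lemma h3pos (hfβ : 0 < fβ) (hfαβ : fβ < fα)
    (h3 : 2 * c < fα * (2 + δ * ((A.card : ℝ) - 2))) :
    0 < δ * (A.card : ℝ) * fα + 2 * ((1 - δ) * fα - c) := by
  nlinarith [h3]

lemma partB (hfβ : 0 < fβ) (hfαβ : fβ < fα) (hδ0 : 0 < δ) (hδ1 : δ < 1)
    (hA1 : 1 ≤ A.card) (hA2 : 2 ≤ A.card)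
    (h2 : (1 + δ * ((A.card : ℝ) - 1)) * fα
      + (1 + δ * ((A.card : ℝ) + (Aᶜ.card : ℝ) - 2)) * fβ < 2 * c)
    (h3 : 2 * c < fα * (2 + δ * ((A.card : ℝ) - 2))) :
    ∑ C : g.ConnectedComponent, HC g A fα fβ c δ C ≤ Mstar A fα c δ := by
  have hstep1 : ∑ C : g.ConnectedComponent, HC g A fα fβ c δ C
      ≤ ∑ C : g.ConnectedComponent, GC g A fα c δ C :=
    Finset.sum_le_sum (fun C _ => HC_le_GC hfβ hfαβ hδ0 hδ1 hA2 h2 C)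
  have hgen := partB2_gen (c := c) (univ.filter (fun C : g.ConnectedComponent => 1 ≤ aC g A C))
    (fun C => aC g A C) (fun C hC => (Finset.mem_filter.mp hC).2)
    (aC_sum_filter (g := g) (A := A)) (filter_aC_nonempty (g := g) hA1)
    (lt_trans hfβ hfαβ) hδ0
  beta_reduce at hgen
  have hpos := h3pos (A := A) hfβ hfαβ h3
  have hr1 : (1 : ℝ) ≤ ((univ.filter (fun C : g.ConnectedComponent => 1 ≤ aC g A C)).card : ℝ) := by
    exact_mod_cast filter_aC_nonempty (g := g) hA1
  have hnn : 0 ≤ (((univ.filter (fun C : g.ConnectedComponent => 1 ≤ aC g A C)).card : ℝ) - 1)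
      * (δ * (A.card : ℝ) * fα + 2 * ((1 - δ) * fα - c)) := by
    apply mul_nonneg (by linarith) hpos.le
  rw [GC_sum_eq] at hstep1
  rw [Mstar]
  linarith [hgen]

lemma partB_strict1 (hfβ : 0 < fβ) (hfαβ : fβ < fα) (hδ0 : 0 < δ) (hδ1 : δ < 1)
    (hA1 : 1 ≤ A.card) (hA2 : 2 ≤ A.card)
    (h2 : (1 + δ * ((A.card : ℝ) - 1)) * fα
      + (1 + δ * ((A.card : ℝ) + (Aᶜ.card : ℝ) - 2)) * fβ < 2 * c)
    (h3 : 2 * c < fα * (2 + δ * ((A.card : ℝ) - 2)))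
    (hβ : ∃ j, j ∉ A ∧ 0 < g.degree j) :
    ∑ C : g.ConnectedComponent, HC g A fα fβ c δ C < Mstar A fα c δ := by
  obtain ⟨j, hjA, hjd⟩ := hβ
  have hne1 : 1 ≤ neC g A (g.connectedComponentMk j) := by
    apply Finset.card_pos.mpr
    refine ⟨j, Finset.mem_filter.mpr ⟨?_, rfl⟩⟩
    rw [nIso, Finset.mem_filter]
    exact ⟨Finset.mem_univ _, hjA, hjd⟩
  have hstep1 : ∑ C : g.ConnectedComponent, HC g A fα fβ c δ C
      < ∑ C : g.ConnectedComponent, GC g A fα c δ C :=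
    Finset.sum_lt_sum (fun C _ => HC_le_GC hfβ hfαβ hδ0 hδ1 hA2 h2 C)
      ⟨g.connectedComponentMk j, Finset.mem_univ _,
        HC_lt_GC hfβ hfαβ hδ0 hδ1 hA2 h2 _ hne1⟩
  have hgen := partB2_gen (c := c) (univ.filter (fun C : g.ConnectedComponent => 1 ≤ aC g A C))
    (fun C => aC g A C) (fun C hC => (Finset.mem_filter.mp hC).2)
    (aC_sum_filter (g := g) (A := A)) (filter_aC_nonempty (g := g) hA1)
    (lt_trans hfβ hfαβ) hδ0
  beta_reduce at hgen
  have hpos := h3pos (A := A) hfβ hfαβ h3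
  have hr1 : (1 : ℝ) ≤ ((univ.filter (fun C : g.ConnectedComponent => 1 ≤ aC g A C)).card : ℝ) := by
    exact_mod_cast filter_aC_nonempty (g := g) hA1
  have hnn : 0 ≤ (((univ.filter (fun C : g.ConnectedComponent => 1 ≤ aC g A C)).card : ℝ) - 1)
      * (δ * (A.card : ℝ) * fα + 2 * ((1 - δ) * fα - c)) := by
    apply mul_nonneg (by linarith) hpos.le
  rw [GC_sum_eq] at hstep1
  rw [Mstar]
  linarith [hgen]

lemma partB_strict2 (hfβ : 0 < fβ) (hfαβ : fβ < fα) (hδ0 : 0 < δ) (hδ1 : δ < 1)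
    (hA1 : 1 ≤ A.card) (hA2 : 2 ≤ A.card)
    (h2 : (1 + δ * ((A.card : ℝ) - 1)) * fα
      + (1 + δ * ((A.card : ℝ) + (Aᶜ.card : ℝ) - 2)) * fβ < 2 * c)
    (h3 : 2 * c < fα * (2 + δ * ((A.card : ℝ) - 2)))
    (hsplit : ∃ i, i ∈ A ∧ ∃ j, j ∈ A ∧ ¬ g.Reachable i j) :
    ∑ C : g.ConnectedComponent, HC g A fα fβ c δ C < Mstar A fα c δ := by
  obtain ⟨i, hiA, j, hjA, hnr⟩ := hsplit
  have hstep1 : ∑ C : g.ConnectedComponent, HC g A fα fβ c δ C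
      ≤ ∑ C : g.ConnectedComponent, GC g A fα c δ C :=
    Finset.sum_le_sum (fun C _ => HC_le_GC hfβ hfαβ hδ0 hδ1 hA2 h2 C)
  have hCne : g.connectedComponentMk i ≠ g.connectedComponentMk j := by
    intro h
    exact hnr (SimpleGraph.ConnectedComponent.exact h)
  have hmemi : g.connectedComponentMk i ∈ univ.filter (fun C : g.ConnectedComponent => 1 ≤ aC g A C) := by
    rw [Finset.mem_filter]
    exact ⟨Finset.mem_univ _, Finset.card_pos.mpr ⟨i, Finset.mem_filter.mpr ⟨hiA, rfl⟩⟩⟩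
  have hmemj : g.connectedComponentMk j ∈ univ.filter (fun C : g.ConnectedComponent => 1 ≤ aC g A C) := by
    rw [Finset.mem_filter]
    exact ⟨Finset.mem_univ _, Finset.card_pos.mpr ⟨j, Finset.mem_filter.mpr ⟨hjA, rfl⟩⟩⟩
  have hr2 : 2 ≤ (univ.filter (fun C : g.ConnectedComponent => 1 ≤ aC g A C)).card :=
    Finset.one_lt_card.mpr ⟨_, hmemi, _, hmemj, hCne⟩
  have hgen := partB2_gen (c := c) (univ.filter (fun C : g.ConnectedComponent => 1 ≤ aC g A C))
    (fun C => aC g A C) (fun C hC => (Finset.mem_filter.mp hC).2)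
    (aC_sum_filter (g := g) (A := A)) (filter_aC_nonempty (g := g) hA1)
    (lt_trans hfβ hfαβ) hδ0
  beta_reduce at hgen
  have hpos := h3pos (A := A) hfβ hfαβ h3
  have hr2' : (2 : ℝ) ≤ ((univ.filter (fun C : g.ConnectedComponent => 1 ≤ aC g A C)).card : ℝ) := by
    exact_mod_cast hr2
  have hppos : 0 < (((univ.filter (fun C : g.ConnectedComponent => 1 ≤ aC g A C)).card : ℝ) - 1)
      * (δ * (A.card : ℝ) * fα + 2 * ((1 - δ) * fα - c)) := by
    apply mul_pos (by linarith) hpos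
  rw [GC_sum_eq] at hstep1
  rw [Mstar]
  linarith [hgen]

end PartB

section Final
open SimpleGraph
variable [Fintype I] [DecidableEq I]
variable {g : SimpleGraph I} {A : Finset I} {fα fβ c δ : ℝ}

lemma r_ge (c1 : ∀ j, j ∉ A → g.degree j = 0) {α₀ : I} (hα₀ : α₀ ∈ A) :
    Aᶜ.card + 1 ≤ Fintype.card g.ConnectedComponent := by
  have hins : (insert α₀ Aᶜ).card = Aᶜ.card + 1 :=
    Finset.card_insert_of_notMem (by simp [hα₀])
  rw [← hins, ← Finset.card_univ]
  apply Finset.card_le_card_of_injOn (fun i => g.connectedComponentMk i)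
    (fun i _ => Finset.mem_univ _)
  intro x hx y hy hxy
  by_contra hne
  have hr : g.Reachable x y := SimpleGraph.ConnectedComponent.exact hxy
  rcases Finset.mem_insert.mp (Finset.mem_coe.mp hx) with rfl | hxB
  · rcases Finset.mem_insert.mp (Finset.mem_coe.mp hy) with rfl | hyB
    · exact hne rfl
    · have := deg_pos_of_reach_ne hr.symm (Ne.symm hne)
      rw [c1 y (Finset.mem_compl.mp hyB)] at this
      omega
  · have := deg_pos_of_reach_ne hr hne
    rw [c1 x (Finset.mem_compl.mp hxB)] at this
    omega

lemma r_le (c2 : ∀ i ∈ A, ∀ j ∈ A, g.Reachable i j) {α₀ : I} (hα₀ : α₀ ∈ A) :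
    Fintype.card g.ConnectedComponent ≤ Aᶜ.card + 1 := by
  have hins : (insert α₀ Aᶜ).card = Aᶜ.card + 1 :=
    Finset.card_insert_of_notMem (by simp [hα₀])
  rw [← hins, ← Finset.card_univ]
  have hρ : ∀ C : g.ConnectedComponent,
      g.connectedComponentMk (Classical.choose C.exists_rep) = C :=
    fun C => Classical.choose_spec C.exists_rep
  apply Finset.card_le_card_of_injOn
    (fun C => if Classical.choose C.exists_rep ∈ A then α₀ else Classical.choose C.exists_rep)
  · intro C _
    dsimp only
    split_ifs with h
    · exact Finset.mem_insert_self _ _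
    · exact Finset.mem_insert_of_mem (Finset.mem_compl.mpr h)
  · intro C _ D _ hCD
    simp only at hCD
    split_ifs at hCD with hC hD hD
    · rw [← hρ C, ← hρ D]
      apply SimpleGraph.ConnectedComponent.sound
      exact (c2 _ hC _ hα₀).trans (c2 _ hα₀ _ hD)
    · exact absurd (hCD ▸ hα₀) hD
    · exact absurd (hCD.symm ▸ hα₀) hC
    · rw [← hρ C, ← hρ D, hCD]

lemma mainUB (hfβ : 0 < fβ) (hfαβ : fβ < fα) (hδ0 : 0 < δ) (hδ1 : δ < 1)
    (hA1 : 1 ≤ A.card) (hA2 : 2 ≤ A.card) (h1 : (1 - δ) * fα < c)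
    (h2 : (1 + δ * ((A.card : ℝ) - 1)) * fα
      + (1 + δ * ((A.card : ℝ) + (Aᶜ.card : ℝ) - 2)) * fβ < 2 * c)
    (h3 : 2 * c < fα * (2 + δ * ((A.card : ℝ) - 2))) :
    totalPayoff (fTheta A fα fβ) c δ g ≤ Mstar A fα c δ :=
  (partA hfβ hfαβ hδ0 hδ1 h1).trans (partB hfβ hfαβ hδ0 hδ1 hA1 hA2 h2 h3)

lemma eq_star (hfβ : 0 < fβ) (hfαβ : fβ < fα) (hδ0 : 0 < δ) (hδ1 : δ < 1)
    (hA2 : 2 ≤ A.card) (h1 : (1 - δ) * fα < c)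
    (h2 : (1 + δ * ((A.card : ℝ) - 1)) * fα
      + (1 + δ * ((A.card : ℝ) + (Aᶜ.card : ℝ) - 2)) * fβ < 2 * c)
    (h3 : 2 * c < fα * (2 + δ * ((A.card : ℝ) - 2)))
    (heq : totalPayoff (fTheta A fα fβ) c δ g = Mstar A fα c δ) :
    ∃ i₀ ∈ A, g = starOn A i₀ := by
  have hA1 : 1 ≤ A.card := by omega
  by_cases c1 : ∃ j, j ∉ A ∧ 0 < g.degree j
  · exfalso
    have hlt := (partA (g := g) hfβ hfαβ hδ0 hδ1 h1).trans_lt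
      (partB_strict1 hfβ hfαβ hδ0 hδ1 hA1 hA2 h2 h3 c1)
    linarith
  push_neg at c1
  have c1' : ∀ j, j ∉ A → g.degree j = 0 := fun j hj => by
    have := c1 j hj
    omega
  by_cases c2 : ∃ i, i ∈ A ∧ ∃ j, j ∈ A ∧ ¬ g.Reachable i j
  · exfalso
    have hlt := (partA (g := g) hfβ hfαβ hδ0 hδ1 h1).trans_lt
      (partB_strict2 hfβ hfαβ hδ0 hδ1 hA1 hA2 h2 h3 c2)
    linarith
  push_neg at c2
  obtain ⟨α₀, hα₀⟩ := Finset.card_pos.mp (show 0 < A.card by omega)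
  have hin : ∀ ⦃i j⦄, g.Adj i j → i ∈ A ∧ j ∈ A := by
    intro i j h
    constructor
    · by_contra hi
      have := deg_pos_of_reach_ne h.reachable h.ne
      rw [c1' i hi] at this
      omega
    · by_contra hj
      have := deg_pos_of_reach_ne h.symm.reachable h.symm.ne
      rw [c1' j hj] at this
      omega
  have hrge := r_ge c1' hα₀
  have hrle := r_le c2 hα₀
  have hcardI : A.card + Aᶜ.card = Fintype.card I := Finset.card_add_card_compl A
  have hG1 := card_le_edge_cc g.edgeFinset.card g rfl
  by_cases c3 : A.card ≤ g.edgeFinset.card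
  · exfalso
    have hstrict : Fintype.card I + 1 ≤ g.edgeFinset.card + Fintype.card g.ConnectedComponent := by
      omega
    have hlt := (partA_strict2 (A := A) hfβ hfαβ hδ0 hδ1 h1 hstrict).trans_le
      (partB hfβ hfαβ hδ0 hδ1 hA1 hA2 h2 h3)
    linarith
  push_neg at c3
  have hm : g.edgeFinset.card + 1 = A.card := by omega
  by_cases c4 : ∀ i ∈ A, ∀ j ∈ A, g.dist i j ≤ 2
  · exact star_unique g A hA2 hin c2 c4 hm
  · exfalso
    push_neg at c4
    obtain ⟨i, hi, j, hj, hd⟩ := c4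
    have hr := c2 i hi j hj
    have hne : j ≠ i := by
      intro h
      subst h
      rw [SimpleGraph.dist_self] at hd
      omega
    have hW : ∃ i0 j0, j0 ≠ i0 ∧ g.Reachable i0 j0 ∧ 3 ≤ g.dist i0 j0 :=
      ⟨i, j, hne, hr, by omega⟩
    have hlt := (partA_strict1 (A := A) hfβ hfαβ hδ0 hδ1 h1 hW).trans_le
      (partB hfβ hfαβ hδ0 hδ1 hA1 hA2 h2 h3)
    linarith

end Final

end AuxProof

/-- Theorem 2(f): a network is strongly efficient iff it is a star on the
type-α agents centered at some type-α agent, with every type-β agent a singleton. -/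
theorem thm2f {I : Type*} [Fintype I] [DecidableEq I]
    (A : Finset I) (fα fβ c δ : ℝ)
    (hA : 1 ≤ A.card) (hB : 1 ≤ Aᶜ.card)
    (hfαβ : fβ < fα) (hfβ : 0 < fβ) (hc : 0 < c)
    (hδ0 : 0 < δ) (hδ1 : δ < 1)
    (hA2 : 2 ≤ A.card)
    (h1 : (1 - δ) * fα < c)
    (h2 : (1 + δ * ((A.card : ℝ) - 1)) * fα + (1 + δ * ((A.card : ℝ) + (Aᶜ.card : ℝ) - 2)) * fβ < 2 * c)
    (h3 : 2 * c < fα * (2 + δ * ((A.card : ℝ) - 2))) :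
    ∀ g : SimpleGraph I,
      StronglyEfficient (fTheta A fα fβ) c δ g ↔ ∃ i₀ ∈ A, g = starOn A i₀ := by
  intro g
  constructor
  · intro heff
    obtain ⟨i₀', hi₀'⟩ := Finset.card_pos.mp (show 0 < A.card by omega)
    have hub : totalPayoff (fTheta A fα fβ) c δ g ≤ Mstar A fα c δ :=
      mainUB hfβ hfαβ hδ0 hδ1 hA hA2 h1 h2 h3
    have hlb : Mstar A fα c δ ≤ totalPayoff (fTheta A fα fβ) c δ g := by
      rw [← totalPayoff_starOn hi₀' hA2]
      exact heff (starOn A i₀')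
    exact eq_star hfβ hfαβ hδ0 hδ1 hA2 h1 h2 h3 (le_antisymm hub hlb)
  · rintro ⟨i₀, hi₀, rfl⟩
    intro g'
    rw [totalPayoff_starOn hi₀ hA2]
    exact mainUB hfβ hfαβ hδ0 hδ1 hA hA2 h1 h2 h3
end
end

section
/- Theorem 2(g): If (1−δ)·f_α < c and both 2(n_α−1)·f_α + n_β·(f_α+f_β) + δ[(n_α−1)(n_α−2)·f_α + n_β(n_β−1)·f_β + n_β(n_α−1)·(f_α+f_β)] − 2(n_α+n_β−1)·c < 0 and f_α·(2+δ(n_α−2)) − 2c < 0, then the empty network (the graph with no edges) is the unique strongly efficient network. -/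
open Finset

noncomputable section

open scoped Classical

variable {I : Type*}

/-- Auxiliary: the "star value" bound used in the proof of Theorem 2(g). -/
def phiVal (fa fb c d x y : ℝ) : ℝ :=
  (x * fa + y * fb) * (1 + d * (x + y - 2)) + (1 - d) * (x + y - 2) * fa
    - 2 * (x + y - 1) * c

lemma phi_neg (fa fb c d : ℝ) (na nb : ℕ) (a b : ℕ)
    (hA : 1 ≤ na) (hB : 1 ≤ nb)
    (hfab : fb < fa) (hfb : 0 < fb)
    (hd0 : 0 < d) (hd1 : d < 1)
    (h2 : 2 * ((na : ℝ) - 1) * fa + (nb : ℝ) * (fa + fb)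
        + d * (((na : ℝ) - 1) * ((na : ℝ) - 2) * fa + (nb : ℝ) * ((nb : ℝ) - 1) * fb
            + (nb : ℝ) * ((na : ℝ) - 1) * (fa + fb))
        - 2 * ((na : ℝ) + (nb : ℝ) - 1) * c < 0)
    (h3 : fa * (2 + d * ((na : ℝ) - 2)) - 2 * c < 0)
    (ha : a ≤ na) (hb : b ≤ nb) (hab : 2 ≤ a + b) :
    phiVal fa fb c d (a : ℝ) (b : ℝ) < 0 := by
  have hfa : 0 < fa := hfb.trans hfab
  have h3' : ∀ x : ℝ, 2 ≤ x → x ≤ (na : ℝ) → phiVal fa fb c d x 0 < 0 := by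
    intro x hx2 hxn
    have key : phiVal fa fb c d x 0 = (x - 1) * (fa * (2 + d * (x - 2)) - 2 * c) := by
      unfold phiVal; ring
    rw [key]
    have hbr : fa * (2 + d * (x - 2)) - 2 * c < 0 := by nlinarith [mul_pos hd0 hfa]
    nlinarith
  by_cases hcase : a + b ≤ na
  · have hk : (2 : ℝ) ≤ (a : ℝ) + (b : ℝ) := by exact_mod_cast hab
    have step : phiVal fa fb c d (a : ℝ) (b : ℝ) ≤ phiVal fa fb c d ((a : ℝ) + (b : ℝ)) 0 := by
      unfold phiVal
      nlinarith [mul_nonneg (mul_nonneg hd0.le (by linarith : (0:ℝ) ≤ (a:ℝ)+(b:ℝ)-2))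
        (mul_nonneg (Nat.cast_nonneg b) (le_of_lt (sub_pos.mpr hfab)))]
    have := h3' ((a : ℝ) + (b : ℝ)) hk (by exact_mod_cast hcase)
    linarith
  · push_neg at hcase
    set t : ℕ := a + b - na with ht
    have ht1 : 1 ≤ t := by omega
    have htb : t ≤ b := by omega
    have htn : t ≤ nb := le_trans htb hb
    have hTsum : (a : ℝ) + (b : ℝ) = (na : ℝ) + (t : ℝ) := by
      have h : a + b = na + t := by omega
      exact_mod_cast congrArg (Nat.cast : ℕ → ℝ) h
    have hk : (2 : ℝ) ≤ (a : ℝ) + (b : ℝ) := by exact_mod_cast hab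
    have hna : (a : ℝ) ≤ (na : ℝ) := by exact_mod_cast ha
    have step1 : phiVal fa fb c d (a : ℝ) (b : ℝ) ≤ phiVal fa fb c d (na : ℝ) (t : ℝ) := by
      unfold phiVal
      rw [← hTsum]
      have htR : (t : ℝ) = (a : ℝ) + (b : ℝ) - (na : ℝ) := by linarith
      have key : ((na : ℝ) * fa + (t : ℝ) * fb) * (1 + d * ((a:ℝ)+(b:ℝ)-2))
          - ((a : ℝ) * fa + (b : ℝ) * fb) * (1 + d * ((a:ℝ)+(b:ℝ)-2))
          = ((na : ℝ) - (a : ℝ)) * (fa - fb) * (1 + d * ((a:ℝ)+(b:ℝ)-2)) := by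
        rw [htR]; ring
      have hnn : 0 ≤ ((na : ℝ) - (a : ℝ)) * (fa - fb) * (1 + d * ((a:ℝ)+(b:ℝ)-2)) := by
        apply mul_nonneg (mul_nonneg (by linarith) (by linarith))
        nlinarith
      linarith
    have hF0 : phiVal fa fb c d (na : ℝ) 0 ≤ 0 := by
      rcases Nat.lt_or_ge na 2 with h | h
      · have hna1 : na = 1 := by omega
        subst hna1
        have hz : phiVal fa fb c d ((1:ℕ) : ℝ) 0 = 0 := by
          unfold phiVal; push_cast; ring
        rw [hz]
      · exact (h3' (na : ℝ) (by exact_mod_cast h) le_rfl).le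
    have hFn : phiVal fa fb c d (na : ℝ) (nb : ℝ) < 0 := by
      have heq : phiVal fa fb c d (na : ℝ) (nb : ℝ)
          = 2 * ((na : ℝ) - 1) * fa + (nb : ℝ) * (fa + fb)
        + d * (((na : ℝ) - 1) * ((na : ℝ) - 2) * fa + (nb : ℝ) * ((nb : ℝ) - 1) * fb
            + (nb : ℝ) * ((na : ℝ) - 1) * (fa + fb))
        - 2 * ((na : ℝ) + (nb : ℝ) - 1) * c := by unfold phiVal; ring
      rw [heq]; exact h2
    have hconv : (nb : ℝ) * phiVal fa fb c d (na : ℝ) (t : ℝ)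
        = ((nb : ℝ) - (t : ℝ)) * phiVal fa fb c d (na : ℝ) 0
          + (t : ℝ) * phiVal fa fb c d (na : ℝ) (nb : ℝ)
          - d * fb * (nb : ℝ) * (t : ℝ) * ((nb : ℝ) - (t : ℝ)) := by
      unfold phiVal; ring
    have ht1' : (1 : ℝ) ≤ (t : ℝ) := by exact_mod_cast ht1
    have htn' : (t : ℝ) ≤ (nb : ℝ) := by exact_mod_cast htn
    have hnb' : (0 : ℝ) < (nb : ℝ) := by exact_mod_cast hB
    have hmul : (nb : ℝ) * phiVal fa fb c d (na : ℝ) (t : ℝ) < 0 := by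
      rw [hconv]
      have h1' : ((nb : ℝ) - t) * phiVal fa fb c d (na : ℝ) 0 ≤ 0 :=
        mul_nonpos_of_nonneg_of_nonpos (by linarith) hF0
      have hq : 0 ≤ d * fb * (nb : ℝ) * (t : ℝ) * ((nb : ℝ) - (t : ℝ)) := by
        have := mul_nonneg (mul_nonneg (mul_nonneg (mul_nonneg hd0.le hfb.le) hnb'.le)
          (by linarith : (0:ℝ) ≤ (t:ℝ))) (by linarith : (0:ℝ) ≤ (nb:ℝ)-(t:ℝ))
        linarith
      have h2' : (t : ℝ) * phiVal fa fb c d (na : ℝ) (nb : ℝ)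
          ≤ phiVal fa fb c d (na : ℝ) (nb : ℝ) := by nlinarith
      linarith
    have hpt : phiVal fa fb c d (na : ℝ) (t : ℝ) < 0 :=
      lt_of_not_ge fun hcon => absurd hmul (not_lt.mpr (mul_nonneg hnb'.le hcon))
    linarith

section CompBound

variable {I : Type*} [Fintype I] [DecidableEq I]

open SimpleGraph

lemma fTheta_pos_s7 (A : Finset I) {fa fb : ℝ} (hfab : fb < fa) (hfb : 0 < fb) (j : I) :
    0 < fTheta A fa fb j := by
  unfold fTheta; split <;> linarith

lemma fTheta_le (A : Finset I) {fa fb : ℝ} (hfab : fb < fa) (j : I) :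
    fTheta A fa fb j ≤ fa := by
  unfold fTheta; split <;> linarith

lemma comp_trivial (f : I → ℝ) (c d : ℝ) (g : SimpleGraph I) (C : g.ConnectedComponent)
    (hK1 : (univ.filter fun i => g.connectedComponentMk i = C).card ≤ 1) :
    ∑ i ∈ univ.filter (fun i => g.connectedComponentMk i = C), payoff f c d g i = 0 := by
  apply Finset.sum_eq_zero
  intro i hi
  have hiC : g.connectedComponentMk i = C := (mem_filter.mp hi).2
  have hmem : ∀ j, g.Reachable i j → j ∈ univ.filter (fun i => g.connectedComponentMk i = C) := by
    intro j hr
    exact mem_filter.mpr ⟨mem_univ _, ((ConnectedComponent.eq.mpr hr).symm.trans hiC)⟩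
  have h1' : ∀ j, ¬ (j ≠ i ∧ g.Reachable i j) := by
    rintro j ⟨hne, hr⟩
    have h2lt : 1 < (univ.filter fun i => g.connectedComponentMk i = C).card :=
      Finset.one_lt_card.mpr ⟨i, hi, j, hmem j hr, fun h => hne h.symm⟩
    omega
  have h2' : ∀ j, ¬ g.Adj i j := by
    intro j hadj
    have h2lt : 1 < (univ.filter fun i => g.connectedComponentMk i = C).card :=
      Finset.one_lt_card.mpr ⟨i, hi, j, hmem j hadj.reachable, hadj.ne⟩
    omega
  unfold payoff
  rw [Finset.filter_congr_decidable, Finset.filter_congr_decidable,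
    Finset.filter_false_of_mem (fun j _ => h1' j),
    Finset.filter_false_of_mem (fun j _ => h2' j)]
  simp

lemma comp_bound (A : Finset I) (fa fb c d : ℝ) (hfab : fb < fa) (hfb : 0 < fb)
    (hd0 : 0 < d) (hd1 : d < 1) (h1 : (1 - d) * fa < c)
    (g : SimpleGraph I) (C : g.ConnectedComponent)
    (hk2 : 2 ≤ (univ.filter fun i => g.connectedComponentMk i = C).card) :
    ∑ i ∈ univ.filter (fun i => g.connectedComponentMk i = C), payoff (fTheta A fa fb) c d g i
      ≤ phiVal fa fb c d
          ((((univ.filter fun i => g.connectedComponentMk i = C)).filter (· ∈ A)).card)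
          ((((univ.filter fun i => g.connectedComponentMk i = C)).filter (fun j => j ∉ A)).card) := by
  classical
  set f : I → ℝ := fTheta A fa fb with hf
  have hfpos : ∀ j, 0 < f j := fTheta_pos_s7 A hfab hfb
  have hfle : ∀ j, f j ≤ fa := fTheta_le A hfab
  set K : Finset I := univ.filter fun i => g.connectedComponentMk i = C with hK
  have hKmem : ∀ {i}, i ∈ K → g.connectedComponentMk i = C := fun h => (mem_filter.mp h).2
  have hKreach : ∀ {i j}, i ∈ K → g.Reachable i j → j ∈ K := by
    intro i j hi hr
    exact mem_filter.mpr ⟨mem_univ _, (ConnectedComponent.eq.mpr hr).symm.trans (hKmem hi)⟩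
  have hreachK : ∀ {i j}, i ∈ K → j ∈ K → g.Reachable i j := by
    intro i j hi hj
    exact ConnectedComponent.eq.mp ((hKmem hi).trans (hKmem hj).symm)
  obtain ⟨r, hrK⟩ := Finset.card_pos.mp (by omega : 0 < K.card)
  -- every vertex of K has a neighbour
  have hnbr : ∀ i ∈ K, ∃ p, g.Adj i p := by
    intro i hi
    obtain ⟨j, hjK, hji⟩ := Finset.exists_mem_ne (s := K) (by omega) i
    obtain ⟨p, hadj, w', -⟩ :=
      SimpleGraph.Walk.exists_eq_cons_of_ne (Ne.symm hji) (hreachK hi hjK).some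
    exact ⟨p, hadj⟩
  set deg : I → ℕ := fun i => (univ.filter fun j => g.Adj i j).card with hdeg
  have hdeg1 : ∀ i ∈ K, 1 ≤ deg i := by
    intro i hi
    obtain ⟨p, hp⟩ := hnbr i hi
    exact Finset.card_pos.mpr ⟨p, mem_filter.mpr ⟨mem_univ _, hp⟩⟩
  -- predecessor towards the root r
  have hpredex : ∀ j : I, ∃ p, (j ∈ K ∧ j ≠ r) →
      g.Adj j p ∧ g.dist r p + 1 = g.dist r j := by
    intro j
    by_cases hj : j ∈ K ∧ j ≠ r
    · obtain ⟨w, hw⟩ := (hreachK hrK hj.1).exists_walk_length_eq_dist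
      obtain ⟨p, hadj, q, hq⟩ := SimpleGraph.Walk.exists_eq_cons_of_ne hj.2 w.reverse
      refine ⟨p, fun _ => ⟨hadj, ?_⟩⟩
      have hl1 : w.reverse.length = w.length := SimpleGraph.Walk.length_reverse w
      have hl2 : w.reverse.length = q.length + 1 := by rw [hq]; simp
      have hle1 : g.dist r p ≤ q.length := by
        have := SimpleGraph.dist_le q.reverse
        rwa [SimpleGraph.Walk.length_reverse] at this
      obtain ⟨wp, hwp⟩ := ((hreachK hrK hj.1).trans hadj.reachable).exists_walk_length_eq_dist
      have hle2 : g.dist r j ≤ g.dist r p + 1 := by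
        have := SimpleGraph.dist_le (wp.concat hadj.symm)
        rwa [SimpleGraph.Walk.length_concat, hwp] at this
      omega
    · exact ⟨r, fun hh => absurd hh hj⟩
  set pr : I → I := fun j => Classical.choose (hpredex j) with hprdef
  have hpr : ∀ j ∈ K, j ≠ r → g.Adj j (pr j) ∧ g.dist r (pr j) + 1 = g.dist r j :=
    fun j hj hne => Classical.choose_spec (hpredex j) ⟨hj, hne⟩
  -- degree sum bound
  set D : ℕ := ∑ i ∈ K, deg i with hD
  have hDge : 2 * (K.card - 1) ≤ D := by
    set T : Finset ((_ : I) × I) := K.sigma (fun i => univ.filter fun j => g.Adj i j) with hT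
    have hTcard : T.card = D := Finset.card_sigma _ _
    set T1 : Finset ((_ : I) × I) :=
      (K.erase r).image (fun j => (⟨j, pr j⟩ : (_ : I) × I)) with hT1
    set T2 : Finset ((_ : I) × I) :=
      (K.erase r).image (fun j => (⟨pr j, j⟩ : (_ : I) × I)) with hT2
    have hmemerase : ∀ j ∈ K.erase r, j ∈ K ∧ j ≠ r := by
      intro j hj
      exact ⟨(Finset.mem_erase.mp hj).2, (Finset.mem_erase.mp hj).1⟩
    have hT1sub : T1 ⊆ T := by
      intro x hx
      obtain ⟨j, hj, rfl⟩ := Finset.mem_image.mp hx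
      obtain ⟨hjK, hjr⟩ := hmemerase j hj
      exact Finset.mem_sigma.mpr ⟨hjK, mem_filter.mpr ⟨mem_univ _, (hpr j hjK hjr).1⟩⟩
    have hT2sub : T2 ⊆ T := by
      intro x hx
      obtain ⟨j, hj, rfl⟩ := Finset.mem_image.mp hx
      obtain ⟨hjK, hjr⟩ := hmemerase j hj
      have hadj := (hpr j hjK hjr).1
      exact Finset.mem_sigma.mpr ⟨hKreach hjK hadj.reachable,
        mem_filter.mpr ⟨mem_univ _, hadj.symm⟩⟩
    have hT1card : T1.card = K.card - 1 := by
      rw [hT1, Finset.card_image_of_injOn (fun x _ y _ hxy => congrArg Sigma.fst hxy),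
        Finset.card_erase_of_mem hrK]
    have hT2card : T2.card = K.card - 1 := by
      rw [hT2, Finset.card_image_of_injOn (fun x _ y _ hxy => congrArg Sigma.snd hxy),
        Finset.card_erase_of_mem hrK]
    have hdisj : Disjoint T1 T2 := by
      rw [Finset.disjoint_left]
      intro x hx1 hx2
      obtain ⟨j, hj, rfl⟩ := Finset.mem_image.mp hx1
      obtain ⟨j', hj', heq⟩ := Finset.mem_image.mp hx2
      obtain ⟨hjK, hjr⟩ := hmemerase j hj
      obtain ⟨hjK', hjr'⟩ := hmemerase j' hj'
      have e1 : pr j' = j := congrArg Sigma.fst heq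
      have e2 : j' = pr j := congrArg Sigma.snd heq
      have d1 := (hpr j hjK hjr).2
      have d2 := (hpr j' hjK' hjr').2
      rw [e1] at d2
      rw [← e2] at d1
      omega
    calc 2 * (K.card - 1) = T1.card + T2.card := by rw [hT1card, hT2card]; omega
      _ = (T1 ∪ T2).card := (Finset.card_union_of_disjoint hdisj).symm
      _ ≤ T.card := Finset.card_le_card (Finset.union_subset hT1sub hT2sub)
      _ = D := hTcard
  -- notation for sums
  set S : ℝ := ∑ j ∈ K, f j with hS
  -- per-vertex payoff bound
  have hper : ∀ i ∈ K, payoff f c d g i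
      ≤ (1 - d) * (∑ j ∈ univ.filter fun j => g.Adj i j, f j)
        + d * (S - f i) - (deg i : ℝ) * c := by
    intro i hi
    set Ni : Finset I := univ.filter fun j => g.Adj i j with hNi
    set Ri : Finset I := univ.filter fun j => j ≠ i ∧ g.Reachable i j with hRi
    have hNR : Ni ⊆ Ri := by
      intro j hj
      have hadj : g.Adj i j := (mem_filter.mp hj).2
      exact mem_filter.mpr ⟨mem_univ _, hadj.ne', hadj.reachable⟩
    have hRK : Ri ⊆ K.erase i := by
      intro j hj
      obtain ⟨-, hne, hr⟩ := mem_filter.mp hj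
      exact Finset.mem_erase.mpr ⟨hne, hKreach hi hr⟩
    have hNKe : Ni ⊆ K.erase i := hNR.trans hRK
    have hsplit : ∑ j ∈ Ri, d ^ (g.dist i j - 1) * f j
        = (∑ j ∈ Ri \ Ni, d ^ (g.dist i j - 1) * f j)
          + ∑ j ∈ Ni, d ^ (g.dist i j - 1) * f j :=
      (Finset.sum_sdiff hNR).symm
    have hNval : ∑ j ∈ Ni, d ^ (g.dist i j - 1) * f j = ∑ j ∈ Ni, f j := by
      apply Finset.sum_congr rfl
      intro j hj
      have hadj : g.Adj i j := (mem_filter.mp hj).2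
      rw [SimpleGraph.dist_eq_one_iff_adj.mpr hadj]
      norm_num
    have hfar : ∑ j ∈ Ri \ Ni, d ^ (g.dist i j - 1) * f j
        ≤ ∑ j ∈ (K.erase i) \ Ni, d * f j := by
      calc ∑ j ∈ Ri \ Ni, d ^ (g.dist i j - 1) * f j
          ≤ ∑ j ∈ Ri \ Ni, d * f j := by
            apply Finset.sum_le_sum
            intro j hj
            obtain ⟨hjR, hjN⟩ := Finset.mem_sdiff.mp hj
            obtain ⟨-, hne, hr⟩ := mem_filter.mp hjR
            have hnadj : ¬ g.Adj i j := fun h =>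
              hjN (mem_filter.mpr ⟨mem_univ _, h⟩)
            have hdist0 : g.dist i j ≠ 0 := fun h =>
              hne ((hr.dist_eq_zero_iff.mp h).symm)
            have hdist1 : g.dist i j ≠ 1 := fun h =>
              hnadj (SimpleGraph.dist_eq_one_iff_adj.mp h)
            have hpow : d ^ (g.dist i j - 1) ≤ d := by
              have := pow_le_pow_of_le_one hd0.le hd1.le
                (by omega : 1 ≤ g.dist i j - 1)
              rwa [pow_one] at this
            exact mul_le_mul_of_nonneg_right hpow (hfpos j).le
        _ ≤ ∑ j ∈ (K.erase i) \ Ni, d * f j := by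
            apply Finset.sum_le_sum_of_subset_of_nonneg
              (Finset.sdiff_subset_sdiff hRK Finset.Subset.rfl)
            intro j _ _
            exact mul_nonneg hd0.le (hfpos j).le
    have hsd2 : ∑ j ∈ (K.erase i) \ Ni, d * f j
        = d * ((S - f i) - ∑ j ∈ Ni, f j) := by
      rw [Finset.sum_sdiff_eq_sub hNKe, ← Finset.mul_sum, ← Finset.mul_sum,
        Finset.sum_erase_eq_sub hi, ← hS]
      ring
    unfold payoff
    rw [Finset.filter_congr_decidable, Finset.filter_congr_decidable, ← hRi, ← hNi]
    have hdegNi : deg i = Ni.card := rfl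
    rw [hdegNi]
    linarith [hsplit, hNval, hfar, hsd2]
  -- sum up
  have htotal : ∑ i ∈ K, payoff f c d g i
      ≤ (1 - d) * (∑ i ∈ K, ∑ j ∈ univ.filter fun j => g.Adj i j, f j)
        + d * ((K.card : ℝ) * S - S) - (D : ℝ) * c := by
    calc ∑ i ∈ K, payoff f c d g i
        ≤ ∑ i ∈ K, ((1 - d) * (∑ j ∈ univ.filter fun j => g.Adj i j, f j)
            + d * (S - f i) - (deg i : ℝ) * c) := Finset.sum_le_sum hper
      _ = (1 - d) * (∑ i ∈ K, ∑ j ∈ univ.filter fun j => g.Adj i j, f j)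
            + d * ((K.card : ℝ) * S - S) - (D : ℝ) * c := by
          rw [Finset.sum_sub_distrib, Finset.sum_add_distrib, ← Finset.mul_sum,
            ← Finset.mul_sum, ← Finset.sum_mul]
          congr 2
          · rw [Finset.sum_sub_distrib, Finset.sum_const, nsmul_eq_mul]
          · rw [hD]
            push_cast
            rfl
  -- swap the double sum
  have hswap : (∑ i ∈ K, ∑ j ∈ univ.filter fun j => g.Adj i j, f j)
      = ∑ j ∈ K, (deg j : ℝ) * f j := by
    have step1 : ∀ i ∈ K, (∑ j ∈ univ.filter fun j => g.Adj i j, f j)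
        = ∑ j ∈ K, if g.Adj i j then f j else 0 := by
      intro i hi
      rw [Finset.sum_filter]
      symm
      apply Finset.sum_subset (Finset.subset_univ K)
      intro j _ hjK
      rw [if_neg]
      intro hadj
      exact hjK (hKreach hi hadj.reachable)
    rw [Finset.sum_congr rfl step1, Finset.sum_comm]
    apply Finset.sum_congr rfl
    intro j hj
    have step2 : (∑ i ∈ K, if g.Adj i j then f j else 0)
        = ∑ i ∈ univ, if g.Adj i j then f j else 0 := by
      apply Finset.sum_subset (Finset.subset_univ K)
      intro x _ hxK
      rw [if_neg]
      intro hadj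
      exact hxK (hKreach hj hadj.symm.reachable)
    rw [step2, ← Finset.sum_filter]
    have hfe : (univ.filter fun i => g.Adj i j) = (univ.filter fun x => g.Adj j x) := by
      apply Finset.filter_congr
      intro x _
      simp [g.adj_comm]
    rw [hfe, Finset.sum_const, nsmul_eq_mul, hdeg]
  -- bound the degree-weighted sum
  have hdegsum : ∑ j ∈ K, (deg j : ℝ) * f j ≤ S + ((D : ℝ) - (K.card : ℝ)) * fa := by
    have per : ∀ j ∈ K, (deg j : ℝ) * f j ≤ f j + ((deg j : ℝ) - 1) * fa := by
      intro j hj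
      have h1j : (1 : ℝ) ≤ (deg j : ℝ) := by exact_mod_cast hdeg1 j hj
      have h2j := hfle j
      have h3j := hfpos j
      nlinarith [mul_nonneg (by linarith : (0:ℝ) ≤ (deg j : ℝ) - 1) (by linarith : (0:ℝ) ≤ fa - f j)]
    calc ∑ j ∈ K, (deg j : ℝ) * f j
        ≤ ∑ j ∈ K, (f j + ((deg j : ℝ) - 1) * fa) := Finset.sum_le_sum per
      _ = S + ((D : ℝ) - (K.card : ℝ)) * fa := by
          rw [Finset.sum_add_distrib, ← Finset.sum_mul, Finset.sum_sub_distrib,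
            Finset.sum_const, nsmul_eq_mul, mul_one, hS, hD]
          push_cast
          ring_nf
  -- put everything together
  set a : ℕ := (K.filter (· ∈ A)).card with ha
  set b : ℕ := (K.filter (fun j => j ∉ A)).card with hb
  have habk : a + b = K.card := Finset.card_filter_add_card_filter_not _
  have hSval : S = (a : ℝ) * fa + (b : ℝ) * fb := by
    rw [hS]
    have : ∀ j ∈ K, f j = if j ∈ A then fa else fb := by
      intro j _; rfl
    rw [Finset.sum_congr rfl this, Finset.sum_ite, Finset.sum_const, Finset.sum_const,
      nsmul_eq_mul, nsmul_eq_mul]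
  have hkR : (K.card : ℝ) = (a : ℝ) + (b : ℝ) := by exact_mod_cast habk.symm
  have hDR : 2 * ((K.card : ℝ) - 1) ≤ (D : ℝ) := by
    have h2le : 2 * K.card - 2 ≤ D := by omega
    have : ((2 * K.card - 2 : ℕ) : ℝ) ≤ (D : ℝ) := by exact_mod_cast h2le
    have hc2 : ((2 * K.card - 2 : ℕ) : ℝ) = 2 * (K.card : ℝ) - 2 := by
      have : 2 ≤ K.card := hk2
      push_cast [Nat.cast_sub (by omega : 2 ≤ 2 * K.card)]
      ring
    linarith [hc2 ▸ this]
  have hT'le : (1 - d) * (∑ i ∈ K, ∑ j ∈ univ.filter fun j => g.Adj i j, f j)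
      ≤ (1 - d) * (S + ((D : ℝ) - (K.card : ℝ)) * fa) := by
    rw [hswap]
    exact mul_le_mul_of_nonneg_left hdegsum (by linarith)
  have hslack : ((D : ℝ) - 2 * ((K.card : ℝ) - 1)) * ((1 - d) * fa - c) ≤ 0 :=
    mul_nonpos_of_nonneg_of_nonpos (by linarith) (by linarith)
  have hphi : phiVal fa fb c d (a : ℝ) (b : ℝ)
      = (1 - d) * (S + ((K.card : ℝ) - 2) * fa) + d * ((K.card : ℝ) * S - S)
        - 2 * ((K.card : ℝ) - 1) * c := by
    rw [hSval, hkR]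
    unfold phiVal
    ring
  have hkey : (1 - d) * (S + ((D : ℝ) - (K.card : ℝ)) * fa) + d * ((K.card : ℝ) * S - S)
        - (D : ℝ) * c
      - ((1 - d) * (S + ((K.card : ℝ) - 2) * fa) + d * ((K.card : ℝ) * S - S)
        - 2 * ((K.card : ℝ) - 1) * c)
      = ((D : ℝ) - 2 * ((K.card : ℝ) - 1)) * ((1 - d) * fa - c) := by ring
  linarith [htotal, hT'le, hslack, hkey, hphi]

end CompBound

/-- Theorem 2(g): the empty network is the unique strongly efficient network. -/
theorem thm2g {I : Type*} [Fintype I] [DecidableEq I]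
    (A : Finset I) (fα fβ c δ : ℝ)
    (hA : 1 ≤ A.card) (hB : 1 ≤ Aᶜ.card)
    (hfαβ : fβ < fα) (hfβ : 0 < fβ) (hc : 0 < c)
    (hδ0 : 0 < δ) (hδ1 : δ < 1)
    (h1 : (1 - δ) * fα < c)
    (h2 : 2 * ((A.card : ℝ) - 1) * fα + (Aᶜ.card : ℝ) * (fα + fβ) + δ * (((A.card : ℝ) - 1) * ((A.card : ℝ) - 2) * fα + (Aᶜ.card : ℝ) * ((Aᶜ.card : ℝ) - 1) * fβ + (Aᶜ.card : ℝ) * ((A.card : ℝ) - 1) * (fα + fβ)) - 2 * ((A.card : ℝ) + (Aᶜ.card : ℝ) - 1) * c < 0)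
    (h3 : fα * (2 + δ * ((A.card : ℝ) - 2)) - 2 * c < 0) :
    StronglyEfficient (fTheta A fα fβ) c δ (⊥ : SimpleGraph I) ∧
      ∀ g : SimpleGraph I, StronglyEfficient (fTheta A fα fβ) c δ g → g = ⊥ := by
  have hbot : totalPayoff (fTheta A fα fβ) c δ (⊥ : SimpleGraph I) = 0 := by
    unfold totalPayoff
    apply Finset.sum_eq_zero
    intro i _
    have h1' : ∀ j, ¬ (j ≠ i ∧ (⊥ : SimpleGraph I).Reachable i j) := by
      rintro j ⟨hne, hr⟩
      exact hne (SimpleGraph.reachable_bot.mp hr).symm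
    have h2' : ∀ j, ¬ (⊥ : SimpleGraph I).Adj i j := fun j h => h
    unfold payoff
    rw [Finset.filter_congr_decidable, Finset.filter_congr_decidable,
      Finset.filter_false_of_mem (fun j _ => h1' j)]
    simp
  -- every component contributes a nonpositive amount; strictly if it is nontrivial
  have hcomp : ∀ (g : SimpleGraph I) (C : g.ConnectedComponent),
      (∑ i ∈ univ.filter (fun i => g.connectedComponentMk i = C),
        payoff (fTheta A fα fβ) c δ g i) ≤ 0 ∧
      (2 ≤ (univ.filter fun i => g.connectedComponentMk i = C).card →
        (∑ i ∈ univ.filter (fun i => g.connectedComponentMk i = C),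
          payoff (fTheta A fα fβ) c δ g i) < 0) := by
    intro g C
    by_cases hk : 2 ≤ (univ.filter fun i => g.connectedComponentMk i = C).card
    · have hb := comp_bound A fα fβ c δ hfαβ hfβ hδ0 hδ1 h1 g C hk
      set K : Finset I := univ.filter fun i => g.connectedComponentMk i = C with hK
      have hsubA : K.filter (· ∈ A) ⊆ A := fun x hx => (Finset.mem_filter.mp hx).2
      have hsubB : K.filter (fun j => j ∉ A) ⊆ Aᶜ := fun x hx =>
        Finset.mem_compl.mpr (Finset.mem_filter.mp hx).2
      have haA : (K.filter (· ∈ A)).card ≤ A.card := Finset.card_le_card hsubA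
      have hbB : (K.filter (fun j => j ∉ A)).card ≤ Aᶜ.card := Finset.card_le_card hsubB
      have habk : (K.filter (· ∈ A)).card + (K.filter (fun j => j ∉ A)).card = K.card :=
        Finset.card_filter_add_card_filter_not _
      have hneg := phi_neg fα fβ c δ A.card Aᶜ.card
        (K.filter (· ∈ A)).card (K.filter (fun j => j ∉ A)).card
        hA hB hfαβ hfβ hδ0 hδ1 h2 h3 haA hbB (by omega)
      constructor
      · linarith
      · intro _; linarith
    · push_neg at hk
      have := comp_trivial (fTheta A fα fβ) c δ g C (by omega)
      constructor
      · linarith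
      · intro h2k; omega
  have hkey : ∀ g : SimpleGraph I, totalPayoff (fTheta A fα fβ) c δ g ≤ 0 ∧
      (g ≠ ⊥ → totalPayoff (fTheta A fα fβ) c δ g < 0) := by
    intro g
    have hfib : totalPayoff (fTheta A fα fβ) c δ g
        = ∑ C : g.ConnectedComponent, ∑ i ∈ univ.filter
            (fun i => g.connectedComponentMk i = C), payoff (fTheta A fα fβ) c δ g i := by
      unfold totalPayoff
      exact (Finset.sum_fiberwise _ _ _).symm
    constructor
    · rw [hfib]
      exact Finset.sum_nonpos fun C _ => (hcomp g C).1
    · intro hne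
      have hedge : ∃ x y, g.Adj x y := by
        by_contra hno
        push_neg at hno
        apply hne
        ext x y
        simp [hno x y]
      obtain ⟨x, y, hxy⟩ := hedge
      rw [hfib]
      have hlt : (∑ i ∈ univ.filter
          (fun i => g.connectedComponentMk i = g.connectedComponentMk x),
          payoff (fTheta A fα fβ) c δ g i) < 0 := by
        apply (hcomp g (g.connectedComponentMk x)).2
        apply Finset.one_lt_card.mpr
        refine ⟨x, Finset.mem_filter.mpr ⟨Finset.mem_univ _, rfl⟩,
          y, Finset.mem_filter.mpr ⟨Finset.mem_univ _, ?_⟩, hxy.ne⟩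
        exact (SimpleGraph.ConnectedComponent.eq.mpr hxy.reachable).symm
      calc (∑ C : g.ConnectedComponent, ∑ i ∈ univ.filter
            (fun i => g.connectedComponentMk i = C), payoff (fTheta A fα fβ) c δ g i)
          < ∑ C : g.ConnectedComponent, (0 : ℝ) := by
            apply Finset.sum_lt_sum (fun C _ => (hcomp g C).1)
            exact ⟨g.connectedComponentMk x, Finset.mem_univ _, hlt⟩
        _ = 0 := by simp
  constructor
  · intro g'
    rw [hbot]
    exact (hkey g').1
  · intro g hg
    by_contra hne
    have h1' := hg (⊥ : SimpleGraph I)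
    rw [hbot] at h1'
    linarith [(hkey g).2 hne]
end
end

section
/- Lemma 2: In the two-type connections model, every strongly efficient network has at most one non-empty component; that is, if g is strongly efficient, then all edges of g lie in a single connected component of g. -/
open Finset

noncomputable section

open scoped Classical

variable {I : Type*}

section Lemma2Aux

variable {I : Type*}

/-- Rewiring: all links of `v` are moved to `u`; `v` becomes isolated. -/
private def rewire (g : SimpleGraph I) (u v : I) : SimpleGraph I where
  Adj a b := a ≠ b ∧ ((a ≠ v ∧ b ≠ v ∧ g.Adj a b) ∨ (a = u ∧ g.Adj v b) ∨ (b = u ∧ g.Adj a v))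
  symm := by
    constructor
    rintro a b ⟨hne, h⟩
    refine ⟨hne.symm, ?_⟩
    rcases h with ⟨h1, h2, h3⟩ | ⟨h1, h2⟩ | ⟨h1, h2⟩
    · exact Or.inl ⟨h2, h1, h3.symm⟩
    · exact Or.inr (Or.inr ⟨h1, h2.symm⟩)
    · exact Or.inr (Or.inl ⟨h1, h2.symm⟩)
  loopless := ⟨fun a h => h.1 rfl⟩

private def phi (u v x : I) : I := if x = v then u else x

private lemma phi_cases {u v x x' : I} (h : phi u v x = phi u v x') :
    x = x' ∨ (x = v ∧ x' = u) ∨ (x' = v ∧ x = u) := by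
  unfold phi at h
  by_cases hx : x = v <;> by_cases hx' : x' = v
  · exact Or.inl (hx.trans hx'.symm)
  · rw [if_pos hx, if_neg hx'] at h; exact Or.inr (Or.inl ⟨hx, h.symm⟩)
  · rw [if_neg hx, if_pos hx'] at h; exact Or.inr (Or.inr ⟨hx', h⟩)
  · rw [if_neg hx, if_neg hx'] at h; exact Or.inl h

private lemma phi_eq_of_ne {u v x a : I} (h : phi u v x = a) (ha : a ≠ u) : x = a := by
  unfold phi at h
  by_cases hx : x = v <;> simp [hx] at h <;> tauto

private lemma adj_map {g : SimpleGraph I} {u v : I} (hnr : ¬ g.Reachable u v)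
    {x y : I} (h : g.Adj x y) : (rewire g u v).Adj (phi u v x) (phi u v y) := by
  by_cases hx : x = v <;> by_cases hy : y = v
  · exact absurd (hx ▸ hy ▸ h) (g.irrefl)
  · subst hx
    have hyu : y ≠ u := fun hyu => hnr (hyu ▸ h.reachable).symm
    exact ⟨by simpa [phi, hy] using hyu.symm, Or.inr (Or.inl ⟨by simp [phi], by simpa [phi, hy] using h⟩)⟩
  · subst hy
    have hxu : x ≠ u := fun hxu => hnr (hxu ▸ h.reachable)
    exact ⟨by simpa [phi, hx] using hxu, Or.inr (Or.inr ⟨by simp [phi], by simpa [phi, hx] using h⟩)⟩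
  · exact ⟨by simpa [phi, hx, hy] using h.ne, Or.inl ⟨by simp [phi, hx], by simp [phi, hy], by simpa [phi, hx, hy] using h⟩⟩

private lemma walk_map {g : SimpleGraph I} {u v : I} (hnr : ¬ g.Reachable u v)
    {x y : I} (p : g.Walk x y) :
    ∃ q : (rewire g u v).Walk (phi u v x) (phi u v y), q.length = p.length := by
  induction p with
  | nil => exact ⟨SimpleGraph.Walk.nil, rfl⟩
  | cons h p ih =>
    obtain ⟨q, hq⟩ := ih
    exact ⟨SimpleGraph.Walk.cons (adj_map hnr h) q, by simp [hq]⟩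

private lemma reach_map {g : SimpleGraph I} {u v : I} (hnr : ¬ g.Reachable u v)
    {x y : I} (hr : g.Reachable x y) : (rewire g u v).Reachable (phi u v x) (phi u v y) := by
  obtain ⟨p⟩ := hr
  obtain ⟨q, _⟩ := walk_map hnr p
  exact ⟨q⟩

private lemma dist_map {g : SimpleGraph I} {u v : I} (hnr : ¬ g.Reachable u v)
    {x y : I} (hr : g.Reachable x y) :
    (rewire g u v).dist (phi u v x) (phi u v y) ≤ g.dist x y := by
  obtain ⟨p, hp⟩ := hr.exists_walk_length_eq_dist
  obtain ⟨q, hq⟩ := walk_map hnr p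
  calc (rewire g u v).dist (phi u v x) (phi u v y) ≤ q.length := SimpleGraph.dist_le q
    _ = g.dist x y := by rw [hq, hp]

private lemma phi_inj {g : SimpleGraph I} {u v : I} (hnr : ¬ g.Reachable u v)
    {x y x' y' : I} (hne : y ≠ x) (hr : g.Reachable x y)
    (hne' : y' ≠ x') (hr' : g.Reachable x' y')
    (h1 : phi u v x = phi u v x') (h2 : phi u v y = phi u v y') : x = x' ∧ y = y' := by
  rcases phi_cases h1 with hx | ⟨hxv, hxu⟩ | ⟨hxv, hxu⟩
  · refine ⟨hx, ?_⟩
    rcases phi_cases h2 with hy | ⟨hyv, hyu⟩ | ⟨hyv, hyu⟩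
    · exact hy
    · subst hx; subst hyv; subst hyu
      exact absurd (hr'.symm.trans hr) hnr
    · subst hx; subst hyv; subst hyu
      exact absurd (hr.symm.trans hr') hnr
  · subst hxv; subst hxu
    rcases phi_cases h2 with hy | ⟨hyv, hyu⟩ | ⟨hyv, hyu⟩
    · subst hy
      exact absurd (hr'.trans hr.symm) hnr
    · exact absurd (hyv.trans rfl) hne
    · subst hyu
      exact absurd hr.symm hnr
  · subst hxv; subst hxu
    rcases phi_cases h2 with hy | ⟨hyv, hyu⟩ | ⟨hyv, hyu⟩
    · subst hy
      exact absurd (hr.trans hr'.symm) hnr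
    · subst hyv
      exact absurd hr hnr
    · exact absurd (hyv.trans rfl) hne'

section WithFintype

variable [Fintype I]

private lemma sum_deg_eq (h : SimpleGraph I) :
    ∑ i, (Finset.univ.filter fun j => h.Adj i j).card
      = ((Finset.univ ×ˢ Finset.univ).filter fun p : I × I => h.Adj p.1 p.2).card := by
  rw [Finset.card_filter, Finset.sum_product]
  exact Finset.sum_congr rfl fun i _ => Finset.card_filter _ _

private lemma deg_sum_eq {g : SimpleGraph I} {u v : I} (hnr : ¬ g.Reachable u v) :
    ∑ i, (Finset.univ.filter fun j => g.Adj i j).card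
      = ∑ i, (Finset.univ.filter fun j => (rewire g u v).Adj i j).card := by
  rw [sum_deg_eq, sum_deg_eq]
  refine Finset.card_bij (fun p _ => (phi u v p.1, phi u v p.2)) ?_ ?_ ?_
  · intro p hp
    simp only [Finset.mem_filter, Finset.mem_product, Finset.mem_univ, true_and] at hp ⊢
    exact adj_map hnr hp
  · intro p hp q hq hpq
    simp only [Finset.mem_filter, Finset.mem_product, Finset.mem_univ, true_and] at hp hq
    obtain ⟨h1, h2⟩ := Prod.mk.injEq .. ▸ hpq
    obtain ⟨e1, e2⟩ := phi_inj hnr hp.ne' hp.reachable hq.ne' hq.reachable h1 h2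
    exact Prod.ext e1 e2
  · intro q hq
    simp only [Finset.mem_filter, Finset.mem_product, Finset.mem_univ, true_and] at hq
    obtain ⟨hne, hcl⟩ := hq
    rcases hcl with ⟨h1, h2, h3⟩ | ⟨h1, h2⟩ | ⟨h1, h2⟩
    · exact ⟨q, by simpa using h3, by simp [phi, h1, h2]⟩
    · refine ⟨(v, q.2), by simpa using h2, ?_⟩
      simp [phi, h2.ne.symm, h1.symm]
    · refine ⟨(q.1, v), by simpa using h2, ?_⟩
      simp [phi, h2.ne, h1.symm]

private lemma totalPayoff_eq (f : I → ℝ) (c δ : ℝ) (h : SimpleGraph I) :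
    totalPayoff f c δ h =
      (∑ p ∈ (Finset.univ ×ˢ Finset.univ).filter
          (fun p : I × I => p.2 ≠ p.1 ∧ h.Reachable p.1 p.2),
        δ ^ (h.dist p.1 p.2 - 1) * f p.2)
      - (∑ i, ((Finset.univ.filter fun j => h.Adj i j).card : ℝ)) * c := by
  rw [totalPayoff]
  simp only [payoff, Finset.sum_sub_distrib, Finset.sum_filter, Finset.sum_product, Finset.sum_mul]

private lemma improve {g : SimpleGraph I} (f : I → ℝ) (c δ : ℝ)
    (hf : ∀ x, 0 < f x) (hδ0 : 0 < δ) (hδ1 : δ ≤ 1)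
    {u v a b : I} (hau : g.Adj a u) (hvb : g.Adj v b)
    (hnr : ¬ g.Reachable u v) (hfvu : f v ≤ f u) :
    totalPayoff f c δ g < totalPayoff f c δ (rewire g u v) := by
  set g' := rewire g u v with hg'
  rw [totalPayoff_eq, totalPayoff_eq]
  have hcost : ∑ i, ((Finset.univ.filter fun j => g.Adj i j).card : ℝ)
      = ∑ i, ((Finset.univ.filter fun j => g'.Adj i j).card : ℝ) := by
    exact_mod_cast congrArg (Nat.cast : ℕ → ℝ) (by exact_mod_cast deg_sum_eq hnr)
  rw [← hcost]
  have hben : (∑ p ∈ (Finset.univ ×ˢ Finset.univ).filter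
          (fun p : I × I => p.2 ≠ p.1 ∧ g.Reachable p.1 p.2),
        δ ^ (g.dist p.1 p.2 - 1) * f p.2)
      < (∑ p ∈ (Finset.univ ×ˢ Finset.univ).filter
          (fun p : I × I => p.2 ≠ p.1 ∧ g'.Reachable p.1 p.2),
        δ ^ (g'.dist p.1 p.2 - 1) * f p.2) := by
    set P := (Finset.univ ×ˢ Finset.univ).filter
        (fun p : I × I => p.2 ≠ p.1 ∧ g.Reachable p.1 p.2) with hP
    set P' := (Finset.univ ×ˢ Finset.univ).filter
        (fun p : I × I => p.2 ≠ p.1 ∧ g'.Reachable p.1 p.2) with hP'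
    set Φ : I × I → I × I := fun p => (phi u v p.1, phi u v p.2) with hΦ
    set Q := P.image Φ with hQ
    have hmemP : ∀ p : I × I, p ∈ P ↔ p.2 ≠ p.1 ∧ g.Reachable p.1 p.2 := by
      intro p; simp [hP]
    have hmemP' : ∀ p : I × I, p ∈ P' ↔ p.2 ≠ p.1 ∧ g'.Reachable p.1 p.2 := by
      intro p; simp [hP']
    -- the distinguished new pair
    have hanv : a ≠ v := fun h => hnr (by rw [h] at hau; exact hau.symm.reachable)
    have hbnu : b ≠ u := fun h => hnr (h ▸ hvb.reachable).symm
    have hgab : ¬ g.Reachable a b :=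
      fun h => hnr ((hau.symm.reachable.trans h).trans hvb.symm.reachable)
    have habne : b ≠ a := fun h => hgab (h ▸ SimpleGraph.Reachable.refl _)
    have hadj1 : g'.Adj a u := ⟨hau.ne, Or.inl ⟨hanv, fun h => hnr (h ▸ SimpleGraph.Reachable.refl u), hau⟩⟩
    have hadj2 : g'.Adj u b := ⟨fun h => hbnu h.symm, Or.inr (Or.inl ⟨rfl, hvb⟩)⟩
    have habP' : (a, b) ∈ P' :=
      (hmemP' _).2 ⟨habne, hadj1.reachable.trans hadj2.reachable⟩
    have habQ : (a, b) ∉ Q := by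
      intro hmem
      obtain ⟨p, hp, hpe⟩ := Finset.mem_image.1 hmem
      obtain ⟨hpne, hpr⟩ := (hmemP _).1 hp
      have h1 : phi u v p.1 = a := congrArg Prod.fst hpe
      have h2 : phi u v p.2 = b := congrArg Prod.snd hpe
      have e1 : p.1 = a := phi_eq_of_ne h1 hau.ne
      have e2 : p.2 = b := phi_eq_of_ne h2 hbnu
      exact hgab (e1 ▸ e2 ▸ hpr)
    have hQsub : Q ⊆ P' := by
      intro q hq
      obtain ⟨p, hp, hpe⟩ := Finset.mem_image.1 hq
      obtain ⟨hpne, hpr⟩ := (hmemP _).1 hp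
      refine hpe ▸ (hmemP' _).2 ⟨?_, reach_map hnr hpr⟩
      intro h
      rcases phi_cases h with h' | ⟨h1, h2⟩ | ⟨h1, h2⟩
      · exact hpne h'
      · exact hnr (by rw [← h2, ← h1]; exact hpr)
      · exact hnr (by rw [← h1, ← h2]; exact hpr.symm)
    have hinj : ∀ p ∈ P, ∀ q ∈ P, Φ p = Φ q → p = q := by
      intro p hp q hq hpq
      obtain ⟨hpne, hpr⟩ := (hmemP _).1 hp
      obtain ⟨hqne, hqr⟩ := (hmemP _).1 hq
      obtain ⟨e1, e2⟩ := phi_inj hnr hpne hpr hqne hqr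
        (congrArg Prod.fst hpq) (congrArg Prod.snd hpq)
      exact Prod.ext e1 e2
    have hpoint : ∀ p ∈ P, δ ^ (g.dist p.1 p.2 - 1) * f p.2
        ≤ δ ^ (g'.dist (Φ p).1 (Φ p).2 - 1) * f (Φ p).2 := by
      intro p hp
      obtain ⟨hpne, hpr⟩ := (hmemP _).1 hp
      have hd := dist_map hnr hpr
      have hpow : δ ^ (g.dist p.1 p.2 - 1) ≤ δ ^ (g'.dist (phi u v p.1) (phi u v p.2) - 1) :=
        pow_le_pow_of_le_one hδ0.le hδ1 (Nat.sub_le_sub_right hd 1)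
      have hfle : f p.2 ≤ f (phi u v p.2) := by
        by_cases h : p.2 = v
        · simpa [phi, h] using hfvu
        · simp [phi, h]
      exact mul_le_mul hpow hfle (hf _).le (pow_nonneg hδ0.le _)
    calc ∑ p ∈ P, δ ^ (g.dist p.1 p.2 - 1) * f p.2
        ≤ ∑ p ∈ P, δ ^ (g'.dist (Φ p).1 (Φ p).2 - 1) * f (Φ p).2 :=
          Finset.sum_le_sum hpoint
      _ = ∑ p ∈ Q, δ ^ (g'.dist p.1 p.2 - 1) * f p.2 := (Finset.sum_image (g := Φ)
          (f := fun p : I × I => δ ^ (g'.dist p.1 p.2 - 1) * f p.2) hinj).symm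
      _ < ∑ p ∈ insert (a, b) Q, δ ^ (g'.dist p.1 p.2 - 1) * f p.2 := by
          rw [Finset.sum_insert habQ]
          have : 0 < δ ^ (g'.dist a b - 1) * f b :=
            mul_pos (pow_pos hδ0 _) (hf b)
          linarith
      _ ≤ ∑ p ∈ P', δ ^ (g'.dist p.1 p.2 - 1) * f p.2 := by
          refine Finset.sum_le_sum_of_subset_of_nonneg ?_ ?_
          · exact Finset.insert_subset habP' hQsub
          · exact fun p _ _ => mul_nonneg (pow_nonneg hδ0.le _) (hf _).le
  linarith

end WithFintype

end Lemma2Aux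

/-- Lemma 2: a strongly efficient network has at most one non-empty component:
any two links lie in the same connected component. -/
theorem lemma2 {I : Type*} [Fintype I] [DecidableEq I]
    (A : Finset I) (fα fβ c δ : ℝ)
    (hA : 1 ≤ A.card) (hB : 1 ≤ Aᶜ.card)
    (hfαβ : fβ < fα) (hfβ : 0 < fβ) (hc : 0 < c)
    (hδ0 : 0 < δ) (hδ1 : δ < 1)
    (g : SimpleGraph I) (hSE : StronglyEfficient (fTheta A fα fβ) c δ g) :
    ∀ i j k l : I, g.Adj i j → g.Adj k l → g.Reachable i k := by
  intro i j k l hij hkl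
  by_contra hik
  have hf : ∀ x, 0 < fTheta A fα fβ x := by
    intro x; unfold fTheta; split
    · linarith
    · exact hfβ
  have hnjk : ¬ g.Reachable j k := fun h => hik (hij.reachable.trans h)
  rcases le_total (fTheta A fα fβ j) (fTheta A fα fβ k) with hfc | hfc
  · -- u = k, v = j, a = l, b = i
    have := improve (fTheta A fα fβ) c δ hf hδ0 hδ1.le hkl.symm hij.symm
      (fun h => hnjk h.symm) hfc
    exact absurd (hSE _) (not_le.2 this)
  · -- u = j, v = k, a = i, b = l
    have := improve (fTheta A fα fβ) c δ hf hδ0 hδ1.le hij hkl hnjk hfc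
    exact absurd (hSE _) (not_le.2 this)
end
end
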